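/- arXiv:1110.0710 — 6 statements merged into one kernel-verified Lean document; each statement's English description precedes it below -/
import Mathlib

section
/- There exists a constant C_n > 0 for each integer n ≥ 1 such that for all λ ∈ (0,1) and all (x,p) ∈ [0,1) × ℝ, the quantity 𝒱_{λ,n}(x,p) satisfies 𝒱_{λ,n}(x,p) ≤ C_n·(1 + λ|p|)^{2n+1}. -/
open MeasureTheory Real

/-- The jump rate kernel `𝒥_λ(p,p')`. -/
noncomputable def Jker (lam p p' : ℝ) : ℝ :=
  ((1 + lam) / 64) * |p' - p| *
    Real.exp (-(1/2) * ((1 - lam)/2 * p - (1 + lam)/2 * p')^2)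

/-- The Hamiltonian `H(x,p) = p²/2 + V(x)`. -/
noncomputable def Ham (V : ℝ → ℝ) (x p : ℝ) : ℝ := p^2 / 2 + V x

/-- `𝒱_{λ,n}(x,p)`. -/
noncomputable def Vcal (V : ℝ → ℝ) (n : ℕ) (lam x p : ℝ) : ℝ :=
  ∫ p' : ℝ, |Real.sqrt (2 * Ham V x p') - Real.sqrt (2 * Ham V x p)| ^ (2 * n) * Jker lam p p'


lemma aux_sqrt_lip (c x y : ℝ) (hc : 0 ≤ c) :
    |Real.sqrt (x^2 + c) - Real.sqrt (y^2 + c)| ≤ |x - y| := by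
  have key : ∀ a b : ℝ, Real.sqrt (a^2 + c) ≤ Real.sqrt (b^2 + c) + |a - b| := by
    intro a b
    have hb2 : Real.sqrt (b^2+c)^2 = b^2 + c := Real.sq_sqrt (by positivity)
    have hb1 : |b| ≤ Real.sqrt (b^2+c) := by
      rw [← Real.sqrt_sq_eq_abs]; exact Real.sqrt_le_sqrt (by linarith)
    have h0 : (0:ℝ) ≤ Real.sqrt (b^2+c) + |a - b| := by positivity
    rw [show Real.sqrt (b^2+c) + |a-b| = Real.sqrt ((Real.sqrt (b^2+c) + |a-b|)^2) from
      (Real.sqrt_sq h0).symm]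
    apply Real.sqrt_le_sqrt
    have habs : |a| - |b| ≤ |a - b| := abs_sub_abs_le_abs_sub a b
    nlinarith [sq_abs a, sq_abs b, abs_nonneg (a-b), abs_nonneg a, abs_nonneg b,
      mul_nonneg (sub_nonneg.2 hb1) (abs_nonneg (a-b)),
      mul_nonneg (show (0:ℝ) ≤ |a-b| + |b| - |a| by linarith)
        (show (0:ℝ) ≤ |a-b| + |b| + |a| by positivity)]
  rw [abs_sub_le_iff]
  constructor
  · linarith [key x y]
  · have := key y x; rw [abs_sub_comm y x] at this; linarith

lemma aux_two_pow (s t : ℝ) (hs : 0 ≤ s) (ht : 0 ≤ t) (k : ℕ) :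
    (s + t)^k ≤ 2^k * (s^k + t^k) := by
  have h2k : (0:ℝ) ≤ 2^k := by positivity
  rcases le_total s t with h | h
  · have h1 : (s+t)^k ≤ (2*t)^k := pow_le_pow_left₀ (by positivity) (by linarith) k
    have h2 : (0:ℝ) ≤ s^k := pow_nonneg hs k
    calc (s+t)^k ≤ (2*t)^k := h1
      _ = 2^k * t^k := mul_pow 2 t k
      _ ≤ 2^k * (s^k + t^k) := by nlinarith
  · have h1 : (s+t)^k ≤ (2*s)^k := pow_le_pow_left₀ (by positivity) (by linarith) k
    have h2 : (0:ℝ) ≤ t^k := pow_nonneg ht k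
    calc (s+t)^k ≤ (2*s)^k := h1
      _ = 2^k * s^k := mul_pow 2 s k
      _ ≤ 2^k * (s^k + t^k) := by nlinarith

lemma aux_pow_le_fact_exp (x : ℝ) (hx : 0 ≤ x) (k : ℕ) :
    x ^ k ≤ k.factorial * Real.exp x := by
  have h := Real.sum_le_exp_of_nonneg hx (k+1)
  have h2 : x ^ k / (k.factorial : ℝ) ≤ ∑ i ∈ Finset.range (k+1), x ^ i / (i.factorial : ℝ) :=
    Finset.single_le_sum (f := fun i => x ^ i / (i.factorial : ℝ))
      (fun i _ => by positivity) (Finset.self_mem_range_succ k)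
  have hk : (0:ℝ) < k.factorial := by exact_mod_cast k.factorial_pos
  have h3 := le_trans h2 h
  rw [div_le_iff₀ hk] at h3
  linarith

lemma aux_abs_pow_exp_int (k : ℕ) :
    Integrable fun u : ℝ => |u| ^ k * Real.exp (-(1/8) * u^2) := by
  have hM : (0:ℝ) ≤ 1 + 16^k * k.factorial := by positivity
  apply Integrable.mono'
    ((integrable_exp_neg_mul_sq (show (0:ℝ) < 1/16 by norm_num)).const_mul
      ((1 : ℝ) + 16^k * k.factorial))
  · apply Continuous.aestronglyMeasurable
    exact (continuous_abs.pow k).mul (Real.continuous_exp.comp (by continuity))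
  · filter_upwards with u
    rw [Real.norm_eq_abs, abs_of_nonneg (by positivity)]
    set A := Real.exp (-(1/16) * u^2) with hA
    have hA0 : (0:ℝ) < A := Real.exp_pos _
    have hA1 : A ≤ 1 := Real.exp_le_one_iff.mpr (by nlinarith [sq_nonneg u])
    have hAA : Real.exp (-(1/8) * u^2) = A * A := by
      rw [hA, ← Real.exp_add]; ring_nf
    have hfac : (u^2)^k * A ≤ 16^k * k.factorial := by
      have h1 : (u^2/16)^k ≤ k.factorial * Real.exp (u^2/16) :=
        aux_pow_le_fact_exp _ (by positivity) k
      have h2 : Real.exp (u^2/16) * A = 1 := by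
        rw [hA, ← Real.exp_add]; rw [show u^2/16 + -(1/16) * u^2 = 0 by ring, Real.exp_zero]
      have h3 : (u^2)^k = 16^k * (u^2/16)^k := by
        rw [← mul_pow]; ring_nf
      calc (u^2)^k * A = 16^k * ((u^2/16)^k * A) := by rw [h3]; ring
        _ ≤ 16^k * ((k.factorial * Real.exp (u^2/16)) * A) := by
            apply mul_le_mul_of_nonneg_left _ (by positivity)
            exact mul_le_mul_of_nonneg_right h1 hA0.le
        _ = 16^k * k.factorial * (Real.exp (u^2/16) * A) := by ring
        _ = 16^k * k.factorial := by rw [h2, mul_one]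
    have habs : |u|^k ≤ 1 + (u^2)^k := by
      rcases le_total (|u|) 1 with h | h
      · have := pow_le_one₀ (abs_nonneg u) h (n := k)
        nlinarith [pow_nonneg (sq_nonneg u) k]
      · have h1 : |u|^k ≤ (|u|^2)^k := by
          rw [← pow_mul]
          exact pow_le_pow_right₀ h (by omega)
        rw [sq_abs] at h1
        nlinarith
    rw [hAA]
    nlinarith [mul_le_mul_of_nonneg_right habs (mul_nonneg hA0.le hA0.le),
      mul_le_mul_of_nonneg_left hA1 hA0.le,
      pow_nonneg (abs_nonneg u) k]

theorem stmt0 (V : ℝ → ℝ) (hV : ContDiff ℝ 1 V) (hper : ∀ x, V (x + 1) = V x)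
    (hVnn : ∀ x, 0 ≤ V x) (n : ℕ) (hn : 1 ≤ n) :
    ∃ C > 0, ∀ lam ∈ Set.Ioo (0:ℝ) 1, ∀ x ∈ Set.Ico (0:ℝ) 1, ∀ p : ℝ,
      Vcal V n lam x p ≤ C * (1 + lam * |p|) ^ (2 * n + 1) := by
  have hK0i : Integrable (fun u : ℝ => Real.exp (-(1/8) * u^2)) :=
    integrable_exp_neg_mul_sq (by norm_num)
  have hK1i : Integrable (fun u : ℝ => |u|^(2*n+1) * Real.exp (-(1/8) * u^2)) :=
    aux_abs_pow_exp_int _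
  set K0 := ∫ u : ℝ, Real.exp (-(1/8) * u^2) with hK0def
  set K1 := ∫ u : ℝ, |u|^(2*n+1) * Real.exp (-(1/8) * u^2) with hK1def
  have hK0 : 0 ≤ K0 := integral_nonneg fun u => (Real.exp_pos _).le
  have hK1 : 0 ≤ K1 := integral_nonneg fun u => by positivity
  refine ⟨2^(2*n+1) * (K1 + 2^(2*n+1) * K0) + 1, by positivity, ?_⟩
  rintro lam ⟨hl0, hl1⟩ x hx p
  have hlam1 : (0:ℝ) < 1 + lam := by linarith
  set μ := (1 - lam)/(1 + lam) * p with hμdef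
  set d := 2 * lam * |p| with hddef
  have hd0 : 0 ≤ d := by positivity
  have hμp : |μ - p| ≤ d := by
    have h1 : μ - p = -((2*lam)/(1+lam)) * p := by
      rw [hμdef]; field_simp; ring
    rw [h1, abs_mul, abs_neg, abs_div]
    rw [abs_of_pos (show (0:ℝ) < 2*lam by linarith), abs_of_pos hlam1, hddef]
    rw [div_mul_eq_mul_div, div_le_iff₀ hlam1]
    nlinarith [abs_nonneg p, mul_nonneg (mul_nonneg (le_of_lt hl0) (abs_nonneg p)) (le_of_lt hl0)]
  set f : ℝ → ℝ := fun u => (|u|^(2*n+1) + d^(2*n+1)) * Real.exp (-(1/8) * u^2) with hfdef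
  have hfi : Integrable f := by
    have hf2 : f = fun u => |u|^(2*n+1) * Real.exp (-(1/8) * u^2)
        + d^(2*n+1) * Real.exp (-(1/8) * u^2) := funext fun u => by rw [hfdef]; ring
    rw [hf2]; exact hK1i.add (hK0i.const_mul _)
  have key : ∀ p' : ℝ,
      |Real.sqrt (2*Ham V x p') - Real.sqrt (2*Ham V x p)|^(2*n) * Jker lam p p'
      ≤ 2^(2*n+1) * f (p' - μ) := by
    intro p'
    have hsq : |Real.sqrt (2*Ham V x p') - Real.sqrt (2*Ham V x p)| ≤ |p' - p| := by
      have h1 : 2*Ham V x p' = p'^2 + 2*V x := by unfold Ham; ring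
      have h2 : 2*Ham V x p = p^2 + 2*V x := by unfold Ham; ring
      rw [h1, h2]; exact aux_sqrt_lip _ _ _ (by have := hVnn x; linarith)
    have hexp : Real.exp (-(1/2) * ((1 - lam)/2 * p - (1 + lam)/2 * p')^2)
        ≤ Real.exp (-(1/8) * (p' - μ)^2) := by
      apply Real.exp_le_exp.mpr
      have heq : (1 - lam)/2 * p - (1 + lam)/2 * p' = (1 + lam)/2 * (μ - p') := by
        rw [hμdef]; field_simp
      rw [heq]
      nlinarith [sq_nonneg (p' - μ), mul_nonneg hl0.le (sq_nonneg (p' - μ)),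
        mul_nonneg (mul_nonneg hl0.le hl0.le) (sq_nonneg (p' - μ))]
    have habs : |p' - p| ≤ |p' - μ| + d := by
      calc |p' - p| = |(p' - μ) + (μ - p)| := by ring_nf
        _ ≤ |p' - μ| + |μ - p| := abs_add_le _ _
        _ ≤ |p' - μ| + d := by linarith
    have hpow : |p' - p|^(2*n+1) ≤ 2^(2*n+1) * (|p' - μ|^(2*n+1) + d^(2*n+1)) := by
      calc |p'-p|^(2*n+1) ≤ (|p'-μ| + d)^(2*n+1) :=
            pow_le_pow_left₀ (abs_nonneg _) habs _
        _ ≤ _ := aux_two_pow _ _ (abs_nonneg _) hd0 _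
    have hc : (1 + lam)/64 ≤ 1 := by linarith
    have step1 : |Real.sqrt (2*Ham V x p') - Real.sqrt (2*Ham V x p)|^(2*n) * Jker lam p p'
        ≤ |p' - p|^(2*n+1) * Real.exp (-(1/8) * (p' - μ)^2) := by
      unfold Jker
      have e1 : |Real.sqrt (2*Ham V x p') - Real.sqrt (2*Ham V x p)|^(2*n) ≤ |p' - p|^(2*n) :=
        pow_le_pow_left₀ (abs_nonneg _) hsq _
      have e2 : (1 + lam)/64 * |p' - p| *
          Real.exp (-(1/2) * ((1 - lam)/2 * p - (1 + lam)/2 * p')^2)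
          ≤ |p' - p| * Real.exp (-(1/8) * (p' - μ)^2) := by
        calc (1 + lam)/64 * |p' - p| *
            Real.exp (-(1/2) * ((1 - lam)/2 * p - (1 + lam)/2 * p')^2)
            ≤ 1 * |p' - p| * Real.exp (-(1/8) * (p' - μ)^2) := by
              apply mul_le_mul
              · exact mul_le_mul_of_nonneg_right hc (abs_nonneg _)
              · exact hexp
              · exact (Real.exp_pos _).le
              · positivity
          _ = |p' - p| * Real.exp (-(1/8) * (p' - μ)^2) := by ring
      calc |Real.sqrt (2*Ham V x p') - Real.sqrt (2*Ham V x p)|^(2*n) *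
          ((1 + lam)/64 * |p' - p| *
            Real.exp (-(1/2) * ((1 - lam)/2 * p - (1 + lam)/2 * p')^2))
          ≤ |p' - p|^(2*n) * (|p' - p| * Real.exp (-(1/8) * (p' - μ)^2)) := by
            apply mul_le_mul e1 e2 (by positivity) (by positivity)
        _ = |p' - p|^(2*n+1) * Real.exp (-(1/8) * (p' - μ)^2) := by
            rw [pow_succ]; ring
    calc |Real.sqrt (2*Ham V x p') - Real.sqrt (2*Ham V x p)|^(2*n) * Jker lam p p'
        ≤ |p' - p|^(2*n+1) * Real.exp (-(1/8) * (p' - μ)^2) := step1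
      _ ≤ (2^(2*n+1) * (|p' - μ|^(2*n+1) + d^(2*n+1))) * Real.exp (-(1/8) * (p' - μ)^2) :=
          mul_le_mul_of_nonneg_right hpow (Real.exp_pos _).le
      _ = 2^(2*n+1) * f (p' - μ) := by rw [hfdef]; ring
  have h1 : Vcal V n lam x p ≤ ∫ p' : ℝ, 2^(2*n+1) * f (p' - μ) := by
    unfold Vcal
    refine integral_mono_of_nonneg ?_ ((hfi.comp_sub_right μ).const_mul _) ?_
    · filter_upwards with p'
      have hJ : 0 ≤ Jker lam p p' := by unfold Jker; positivity
      exact mul_nonneg (pow_nonneg (abs_nonneg _) _) hJ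
    · filter_upwards with p'
      exact key p'
  have h2 : (∫ p' : ℝ, 2^(2*n+1) * f (p' - μ)) = 2^(2*n+1) * (K1 + d^(2*n+1) * K0) := by
    rw [integral_const_mul, integral_sub_right_eq_self f μ]
    congr 1
    have hf2 : f = fun u => |u|^(2*n+1) * Real.exp (-(1/8) * u^2)
        + d^(2*n+1) * Real.exp (-(1/8) * u^2) := funext fun u => by rw [hfdef]; ring
    rw [hf2, integral_add hK1i (hK0i.const_mul _), integral_const_mul]
  have hbase : (0:ℝ) ≤ lam * |p| := by positivity
  have hpw : (1:ℝ) ≤ (1 + lam*|p|)^(2*n+1) := one_le_pow₀ (by linarith)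
  have hdle : d^(2*n+1) ≤ 2^(2*n+1) * (1 + lam*|p|)^(2*n+1) := by
    have hd2 : d ≤ 2 * (1 + lam*|p|) := by rw [hddef]; nlinarith
    calc d^(2*n+1) ≤ (2*(1+lam*|p|))^(2*n+1) := pow_le_pow_left₀ hd0 hd2 _
      _ = 2^(2*n+1) * (1+lam*|p|)^(2*n+1) := mul_pow _ _ _
  have hP0 : (0:ℝ) ≤ (1 + lam*|p|)^(2*n+1) := by positivity
  calc Vcal V n lam x p ≤ 2^(2*n+1) * (K1 + d^(2*n+1) * K0) := h2 ▸ h1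
    _ ≤ (2^(2*n+1) * (K1 + 2^(2*n+1) * K0) + 1) * (1 + lam * |p|)^(2*n+1) := by
      have e1 : K1 ≤ K1 * (1 + lam*|p|)^(2*n+1) := by nlinarith
      have e2 : d^(2*n+1) * K0 ≤ 2^(2*n+1) * (1 + lam*|p|)^(2*n+1) * K0 :=
        mul_le_mul_of_nonneg_right hdle hK0
      have h2k : (0:ℝ) ≤ 2^(2*n+1) := by positivity
      nlinarith [mul_le_mul_of_nonneg_left (add_le_add e1 e2) h2k,
        mul_nonneg (mul_nonneg h2k hK0) hP0]
end

section
/- There exists a constant C > 0 such that for all λ ∈ (0,1) and all (x,p) ∈ [0,1) × ℝ with |p| ≤ λ^{-1}, 𝒜_λ⁻(x,p) ≤ C·λ·|p|. -/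
open MeasureTheory Real

/-- `𝒜_λ(x,p)`. -/
noncomputable def Acal (V : ℝ → ℝ) (lam x p : ℝ) : ℝ :=
  ∫ p' : ℝ, (Real.sqrt (2 * Ham V x p') - Real.sqrt (2 * Ham V x p)) * Jker lam p p'

/-- Negative part `𝒜_λ⁻`. -/
noncomputable def Aminus (V : ℝ → ℝ) (lam x p : ℝ) : ℝ := max (-(Acal V lam x p)) 0

/-! ### Auxiliary lemmas -/

noncomputable def K0 : ℝ := ∫ u : ℝ, (1 + u^4) * Real.exp (-(1/16) * u^2)

lemma K0_nonneg : 0 ≤ K0 := integral_nonneg fun u => by positivity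

lemma sqrt_key (a b c : ℝ) (hc : 0 ≤ c) :
    a * b + c ≤ Real.sqrt ((a^2 + c) * (b^2 + c)) := by
  rcases le_or_gt (a * b + c) 0 with h | h
  · exact h.trans (Real.sqrt_nonneg _)
  · have h2 : (a * b + c)^2 ≤ (a^2 + c) * (b^2 + c) := by nlinarith [sq_nonneg (a - b)]
    have := Real.sqrt_le_sqrt h2
    rwa [Real.sqrt_sq h.le] at this

lemma sqrt_lip (a b c : ℝ) (hc : 0 ≤ c) :
    |Real.sqrt (a^2 + c) - Real.sqrt (b^2 + c)| ≤ |a - b| := by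
  have hA := Real.sq_sqrt (show (0:ℝ) ≤ a^2 + c by positivity)
  have hB := Real.sq_sqrt (show (0:ℝ) ≤ b^2 + c by positivity)
  have hm : Real.sqrt (a^2 + c) * Real.sqrt (b^2 + c) = Real.sqrt ((a^2 + c) * (b^2 + c)) :=
    (Real.sqrt_mul (by positivity) _).symm
  have key := sqrt_key a b c hc
  have h2 : (Real.sqrt (a^2 + c) - Real.sqrt (b^2 + c))^2 ≤ (a - b)^2 := by nlinarith
  calc |Real.sqrt (a^2 + c) - Real.sqrt (b^2 + c)|
      = Real.sqrt ((Real.sqrt (a^2 + c) - Real.sqrt (b^2 + c))^2) := (Real.sqrt_sq_eq_abs _).symm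
    _ ≤ Real.sqrt ((a - b)^2) := Real.sqrt_le_sqrt h2
    _ = |a - b| := Real.sqrt_sq_eq_abs _

lemma subgrad (p q c : ℝ) (hc : 0 ≤ c) (hp : p ≠ 0) :
    p / Real.sqrt (p^2 + c) * (q - p) ≤ Real.sqrt (q^2 + c) - Real.sqrt (p^2 + c) := by
  have hpc : 0 < p^2 + c := by positivity
  have hS : 0 < Real.sqrt (p^2 + c) := Real.sqrt_pos.2 hpc
  rw [div_mul_eq_mul_div, div_le_iff₀ hS]
  have hm : Real.sqrt (q^2 + c) * Real.sqrt (p^2 + c) = Real.sqrt ((q^2 + c) * (p^2 + c)) :=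
    (Real.sqrt_mul (by positivity) _).symm
  have hP := Real.sq_sqrt hpc.le
  have key := sqrt_key q p c hc
  nlinarith

lemma Jker_nonneg (lam p q : ℝ) (hl : 0 ≤ lam) : 0 ≤ Jker lam p q := by
  unfold Jker; positivity

lemma gauss_bound (s b u : ℝ) (hs : |s| ≤ 1) (hb : 1/2 ≤ b) (hb1 : b ≤ 1) :
    Real.exp (-((1/2) * (s + b*u)^2)) ≤ Real.exp 1 * Real.exp (-(1/16) * u^2) := by
  rw [← Real.exp_add]
  apply Real.exp_le_exp.2
  have hs2 : s^2 ≤ 1 := by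
    have := abs_le.1 hs
    nlinarith [this.1, this.2]
  have hb2 : 1/4 ≤ b^2 := by nlinarith
  have h1 : u^2/4 ≤ b^2 * u^2 := by nlinarith [sq_nonneg u]
  nlinarith [sq_nonneg (2*s + b*u)]

lemma quart_le (u : ℝ) : 1 + u^4 ≤ 4097 * Real.exp ((1/32) * u^2) := by
  have h1 : (1:ℝ) ≤ Real.exp ((1/32) * u^2) := Real.one_le_exp (by positivity)
  have h2 : (1/64) * u^2 + 1 ≤ Real.exp ((1/64) * u^2) := by
    have := Real.add_one_le_exp ((1/64) * u^2); linarith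
  have h3 : Real.exp ((1/32) * u^2) = Real.exp ((1/64) * u^2) * Real.exp ((1/64) * u^2) := by
    rw [← Real.exp_add]; ring_nf
  have h4 : u^4 / 4096 ≤ Real.exp ((1/32) * u^2) := by
    rw [h3]; nlinarith [sq_nonneg u, Real.exp_pos ((1/64) * u^2)]
  nlinarith

lemma int_master : Integrable (fun u : ℝ => (1 + u^4) * Real.exp (-(1/16) * u^2)) := by
  apply Integrable.mono' (g := fun u => 4097 * Real.exp (-(1/32) * u^2))
      ((integrable_exp_neg_mul_sq (by norm_num : (0:ℝ) < 1/32)).const_mul 4097)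
  · apply Continuous.aestronglyMeasurable; fun_prop
  · filter_upwards with u
    rw [Real.norm_eq_abs, abs_of_nonneg (by positivity)]
    calc (1 + u^4) * Real.exp (-(1/16) * u^2)
        ≤ (4097 * Real.exp ((1/32) * u^2)) * Real.exp (-(1/16) * u^2) :=
          mul_le_mul_of_nonneg_right (quart_le u) (Real.exp_pos _).le
      _ = 4097 * Real.exp (-(1/32) * u^2) := by
          rw [mul_assoc, ← Real.exp_add]; ring_nf

lemma exp_diff_one (x y : ℝ) (h : x ≤ y) :
    Real.exp (-x) - Real.exp (-y) ≤ (y - x) * Real.exp (-x) := by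
  have h1 : Real.exp (-y) = Real.exp (-x) * Real.exp (-(y - x)) := by
    rw [← Real.exp_add]; ring_nf
  have h2 : 1 - (y - x) ≤ Real.exp (-(y - x)) := by
    have := Real.add_one_le_exp (-(y - x)); linarith
  nlinarith [Real.exp_pos (-x)]

lemma exp_diff_bound (x y : ℝ) :
    |Real.exp (-x) - Real.exp (-y)| ≤ |x - y| * (Real.exp (-x) + Real.exp (-y)) := by
  rcases le_total x y with h | h
  · have h1 := exp_diff_one x y h
    have h2 : 0 ≤ Real.exp (-x) - Real.exp (-y) := by
      have := Real.exp_le_exp.2 (neg_le_neg h); linarith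
    rw [abs_of_nonneg h2, abs_of_nonpos (by linarith : x - y ≤ 0)]
    nlinarith [Real.exp_pos (-x), Real.exp_pos (-y)]
  · have h1 := exp_diff_one y x h
    have h2 : Real.exp (-x) - Real.exp (-y) ≤ 0 := by
      have := Real.exp_le_exp.2 (neg_le_neg h); linarith
    rw [abs_of_nonpos h2, abs_of_nonneg (by linarith : 0 ≤ x - y)]
    nlinarith [Real.exp_pos (-x), Real.exp_pos (-y)]

lemma u_sq_le (u : ℝ) : u^2 ≤ 1 + u^4 := by nlinarith [sq_nonneg (u^2 - 1)]

lemma u_cube_le (u : ℝ) : u^2 * (1/2 + |u|) ≤ 1 + u^4 := by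
  have h1 : u^2 * |u| ≤ (u^2 + u^4) / 2 := by
    nlinarith [sq_nonneg (|u| * (|u| - 1)), sq_abs u, abs_nonneg u]
  nlinarith [sq_nonneg (u^2 - 1)]

set_option maxHeartbeats 1000000 in
/-- The core estimate. -/
lemma core_est (c lam p : ℝ) (hc : 0 ≤ c) (hl0 : 0 < lam) (hl1 : lam < 1)
    (hp : |p| ≤ lam⁻¹) :
    -(∫ q : ℝ, (Real.sqrt (q^2 + c) - Real.sqrt (p^2 + c)) * Jker lam p q) ≤
      Real.exp 1 * K0 * (lam * |p|) := by
  have hs1 : |lam * p| ≤ 1 := by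
    rw [abs_mul, abs_of_pos hl0]
    calc lam * |p| ≤ lam * lam⁻¹ := by
          exact mul_le_mul_of_nonneg_left hp hl0.le
      _ = 1 := mul_inv_cancel₀ hl0.ne'
  have hb : (1:ℝ)/2 ≤ (1 + lam)/2 := by linarith
  have hb1 : (1 + lam)/2 ≤ 1 := by linarith
  rcases eq_or_ne p 0 with rfl | hp0
  · have h1 : 0 ≤ ∫ q : ℝ, (Real.sqrt (q^2 + c) - Real.sqrt ((0:ℝ)^2 + c)) * Jker lam 0 q := by
      apply integral_nonneg
      intro q
      apply mul_nonneg _ (Jker_nonneg lam 0 q hl0.le)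
      have : (0:ℝ)^2 + c ≤ q^2 + c := by nlinarith [sq_nonneg q]
      linarith [Real.sqrt_le_sqrt this]
    simp only [abs_zero, mul_zero]
    linarith
  -- main case
  set d : ℝ := p / Real.sqrt (p^2 + c) with hd_def
  have hpc : 0 < p^2 + c := by positivity
  have hS : 0 < Real.sqrt (p^2 + c) := Real.sqrt_pos.2 hpc
  have hd : |d| ≤ 1 := by
    rw [hd_def, abs_div, abs_of_pos hS, div_le_one hS]
    calc |p| = Real.sqrt (p^2) := (Real.sqrt_sq_eq_abs p).symm
      _ ≤ Real.sqrt (p^2 + c) := Real.sqrt_le_sqrt (by linarith)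
  -- rewrite of the kernel as a function of q - p
  have hJrw : ∀ q : ℝ, Jker lam p q =
      (1 + lam)/64 * (|q - p| * Real.exp (-((1/2) * (lam * p + (1 + lam)/2 * (q - p))^2))) := by
    intro q
    unfold Jker
    rw [show -(1/2) * ((1 - lam)/2 * p - (1 + lam)/2 * q)^2
        = -((1/2) * (lam * p + (1 + lam)/2 * (q - p))^2) by ring]
    ring
  -- integrability of the two main integrands
  have hmaster : Integrable (fun q : ℝ => (1 + lam)/64 * Real.exp 1 *
      ((1 + (q - p)^4) * Real.exp (-(1/16) * (q - p)^2))) :=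
    (int_master.comp_sub_right p).const_mul _
  have hbnd : ∀ q : ℝ, Jker lam p q ≤
      (1 + lam)/64 * Real.exp 1 * (|q - p| * Real.exp (-(1/16) * (q - p)^2)) := by
    intro q
    rw [hJrw q]
    have hg := gauss_bound (lam * p) ((1 + lam)/2) (q - p) hs1 hb hb1
    calc (1 + lam)/64 * (|q - p| * Real.exp (-((1/2) * (lam * p + (1 + lam)/2 * (q - p))^2)))
        ≤ (1 + lam)/64 * (|q - p| * (Real.exp 1 * Real.exp (-(1/16) * (q - p)^2))) := by
          apply mul_le_mul_of_nonneg_left _ (by linarith)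
          exact mul_le_mul_of_nonneg_left hg (abs_nonneg _)
      _ = (1 + lam)/64 * Real.exp 1 * (|q - p| * Real.exp (-(1/16) * (q - p)^2)) := by ring
  have hnormbnd : ∀ q : ℝ, |q - p| * Jker lam p q ≤
      (1 + lam)/64 * Real.exp 1 * ((1 + (q - p)^4) * Real.exp (-(1/16) * (q - p)^2)) := by
    intro q
    calc |q - p| * Jker lam p q
        ≤ |q - p| * ((1 + lam)/64 * Real.exp 1 * (|q - p| * Real.exp (-(1/16) * (q - p)^2))) :=
          mul_le_mul_of_nonneg_left (hbnd q) (abs_nonneg _)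
      _ = (1 + lam)/64 * Real.exp 1 * ((q - p)^2 * Real.exp (-(1/16) * (q - p)^2)) := by
          rw [← sq_abs (q - p)]; ring
      _ ≤ (1 + lam)/64 * Real.exp 1 * ((1 + (q - p)^4) * Real.exp (-(1/16) * (q - p)^2)) := by
          apply mul_le_mul_of_nonneg_left _ (by positivity)
          exact mul_le_mul_of_nonneg_right (u_sq_le (q - p)) (Real.exp_pos _).le
  have hcontJ : Continuous (fun q : ℝ => Jker lam p q) := by
    unfold Jker; fun_prop
  have hI1 : Integrable (fun q : ℝ =>
      (Real.sqrt (q^2 + c) - Real.sqrt (p^2 + c)) * Jker lam p q) := by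
    apply Integrable.mono' hmaster
    · apply Continuous.aestronglyMeasurable
      apply Continuous.mul _ hcontJ
      exact (Real.continuous_sqrt.comp (by fun_prop)).sub continuous_const
    · filter_upwards with q
      rw [Real.norm_eq_abs, abs_mul, abs_of_nonneg (Jker_nonneg lam p q hl0.le)]
      calc |Real.sqrt (q^2 + c) - Real.sqrt (p^2 + c)| * Jker lam p q
          ≤ |q - p| * Jker lam p q :=
            mul_le_mul_of_nonneg_right (sqrt_lip q p c hc) (Jker_nonneg lam p q hl0.le)
        _ ≤ _ := hnormbnd q
  have hI2 : Integrable (fun q : ℝ => (q - p) * Jker lam p q) := by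
    apply Integrable.mono' hmaster
    · apply Continuous.aestronglyMeasurable
      exact (continuous_id.sub continuous_const).mul hcontJ
    · filter_upwards with q
      rw [Real.norm_eq_abs, abs_mul, abs_of_nonneg (Jker_nonneg lam p q hl0.le)]
      exact hnormbnd q
  -- the pointwise subgradient bound
  have hmono : ∀ q : ℝ, d * ((q - p) * Jker lam p q) ≤
      (Real.sqrt (q^2 + c) - Real.sqrt (p^2 + c)) * Jker lam p q := by
    intro q
    rw [show d * ((q - p) * Jker lam p q) = (d * (q - p)) * Jker lam p q by ring]
    exact mul_le_mul_of_nonneg_right (subgrad p q c hc hp0) (Jker_nonneg lam p q hl0.le)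
  have hAc : d * (∫ q : ℝ, (q - p) * Jker lam p q) ≤
      ∫ q : ℝ, (Real.sqrt (q^2 + c) - Real.sqrt (p^2 + c)) * Jker lam p q := by
    rw [← integral_const_mul]
    exact integral_mono (hI2.const_mul d) hI1 hmono
  -- estimate m := ∫ (q-p) * Jker
  set G1 : ℝ → ℝ := fun u => u * |u| * Real.exp (-((1/2) * (lam * p + (1 + lam)/2 * u)^2))
    with hG1_def
  set G2 : ℝ → ℝ := fun u => u * |u| * Real.exp (-((1/2) * ((1 + lam)/2 * u)^2)) with hG2_def
  have hm : (∫ q : ℝ, (q - p) * Jker lam p q) = (1 + lam)/64 * ∫ u : ℝ, G1 u := by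
    have heq : ∀ q : ℝ, (q - p) * Jker lam p q =
        (fun u : ℝ => (1 + lam)/64 * G1 u) (q - p) := by
      intro q
      rw [hJrw q, hG1_def]
      simp only
      rw [show (q - p) * ((1 + lam)/64 * (|q - p| *
          Real.exp (-((1/2) * (lam * p + (1 + lam)/2 * (q - p))^2))))
        = (1 + lam)/64 * ((q - p) * |q - p| *
          Real.exp (-((1/2) * (lam * p + (1 + lam)/2 * (q - p))^2))) by ring]
    calc (∫ q : ℝ, (q - p) * Jker lam p q)
        = ∫ q : ℝ, (fun u : ℝ => (1 + lam)/64 * G1 u) (q - p) := by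
          congr 1; funext q; exact heq q
      _ = ∫ u : ℝ, (1 + lam)/64 * G1 u :=
          integral_sub_right_eq_self (μ := volume) (fun u => (1 + lam)/64 * G1 u) p
      _ = (1 + lam)/64 * ∫ u : ℝ, G1 u := integral_const_mul _ _
  -- G2 integrates to zero by oddness
  have hG2odd : ∀ u : ℝ, G2 (-u) = - G2 u := by
    intro u
    rw [hG2_def]
    simp only [abs_neg, mul_neg, neg_sq, neg_mul, neg_neg]
  have hG2zero : (∫ u : ℝ, G2 u) = 0 := by
    have h := integral_neg_eq_self G2 (volume : Measure ℝ)
    simp_rw [hG2odd] at h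
    rw [integral_neg] at h
    linarith
  -- integrability of G1, G2
  have hG1bnd : ∀ u : ℝ, |G1 u| ≤ Real.exp 1 * ((1 + u^4) * Real.exp (-(1/16) * u^2)) := by
    intro u
    rw [hG1_def]
    simp only
    rw [abs_mul, abs_of_nonneg (Real.exp_pos _).le, abs_mul, abs_abs,
      show |u| * |u| = u^2 by rw [← sq_abs]; ring]
    have hg := gauss_bound (lam * p) ((1 + lam)/2) u hs1 hb hb1
    calc u^2 * Real.exp (-((1/2) * (lam * p + (1 + lam)/2 * u)^2))
        ≤ u^2 * (Real.exp 1 * Real.exp (-(1/16) * u^2)) :=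
          mul_le_mul_of_nonneg_left hg (sq_nonneg u)
      _ ≤ (1 + u^4) * (Real.exp 1 * Real.exp (-(1/16) * u^2)) :=
          mul_le_mul_of_nonneg_right (u_sq_le u) (by positivity)
      _ = Real.exp 1 * ((1 + u^4) * Real.exp (-(1/16) * u^2)) := by ring
  have hG2bnd : ∀ u : ℝ, |G2 u| ≤ Real.exp 1 * ((1 + u^4) * Real.exp (-(1/16) * u^2)) := by
    intro u
    rw [hG2_def]
    simp only
    rw [abs_mul, abs_of_nonneg (Real.exp_pos _).le, abs_mul, abs_abs,
      show |u| * |u| = u^2 by rw [← sq_abs]; ring]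
    have hg := gauss_bound 0 ((1 + lam)/2) u (by norm_num) hb hb1
    rw [zero_add] at hg
    calc u^2 * Real.exp (-((1/2) * ((1 + lam)/2 * u)^2))
        ≤ u^2 * (Real.exp 1 * Real.exp (-(1/16) * u^2)) :=
          mul_le_mul_of_nonneg_left hg (sq_nonneg u)
      _ ≤ (1 + u^4) * (Real.exp 1 * Real.exp (-(1/16) * u^2)) :=
          mul_le_mul_of_nonneg_right (u_sq_le u) (by positivity)
      _ = Real.exp 1 * ((1 + u^4) * Real.exp (-(1/16) * u^2)) := by ring
  have hIG1 : Integrable G1 := by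
    apply Integrable.mono' (int_master.const_mul (Real.exp 1))
    · apply Continuous.aestronglyMeasurable; rw [hG1_def]; fun_prop
    · filter_upwards with u; rw [Real.norm_eq_abs]; exact hG1bnd u
  have hIG2 : Integrable G2 := by
    apply Integrable.mono' (int_master.const_mul (Real.exp 1))
    · apply Continuous.aestronglyMeasurable; rw [hG2_def]; fun_prop
    · filter_upwards with u; rw [Real.norm_eq_abs]; exact hG2bnd u
  -- pointwise bound on G1 - G2
  have hdiffbnd : ∀ u : ℝ, |G1 u - G2 u| ≤
      lam * |p| * (2 * Real.exp 1) * ((1 + u^4) * Real.exp (-(1/16) * u^2)) := by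
    intro u
    set x : ℝ := (1/2) * (lam * p + (1 + lam)/2 * u)^2 with hx_def
    set y : ℝ := (1/2) * ((1 + lam)/2 * u)^2 with hy_def
    have hG : G1 u - G2 u = u * |u| * (Real.exp (-x) - Real.exp (-y)) := by
      rw [hG1_def, hG2_def]; simp only; ring
    have hxy : |x - y| ≤ |lam * p| * (1/2 + |u|) := by
      have h1 : x - y = (1/2) * ((lam * p) * (lam * p + 2 * ((1 + lam)/2) * u)) := by
        rw [hx_def, hy_def]; ring
      rw [h1, abs_mul, abs_mul, abs_of_nonneg (by norm_num : (0:ℝ) ≤ 1/2)]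
      have h2 : |lam * p + 2 * ((1 + lam)/2) * u| ≤ 1 + 2 * |u| := by
        calc |lam * p + 2 * ((1 + lam)/2) * u| ≤ |lam * p| + |2 * ((1 + lam)/2) * u| :=
              abs_add_le _ _
          _ ≤ 1 + 2 * |u| := by
              rw [abs_mul (2 * ((1 + lam)/2)) u,
                abs_of_nonneg (by linarith : (0:ℝ) ≤ 2 * ((1 + lam)/2))]
              have : 2 * ((1 + lam)/2) ≤ 2 := by linarith
              nlinarith [abs_nonneg u, hs1]
      nlinarith [abs_nonneg (lam * p), abs_nonneg u]
    have hed := exp_diff_bound x y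
    have hex : Real.exp (-x) ≤ Real.exp 1 * Real.exp (-(1/16) * u^2) := by
      rw [hx_def]; exact gauss_bound (lam * p) ((1 + lam)/2) u hs1 hb hb1
    have hey : Real.exp (-y) ≤ Real.exp 1 * Real.exp (-(1/16) * u^2) := by
      rw [hy_def]
      have hg := gauss_bound 0 ((1 + lam)/2) u (by norm_num) hb hb1
      rwa [zero_add] at hg
    have habs_s : |lam * p| = lam * |p| := by rw [abs_mul, abs_of_pos hl0]
    calc |G1 u - G2 u| = u^2 * |Real.exp (-x) - Real.exp (-y)| := by
          rw [hG, abs_mul, abs_mul, abs_abs,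
            show |u| * |u| = u^2 by rw [← sq_abs]; ring]
      _ ≤ u^2 * (|x - y| * (Real.exp (-x) + Real.exp (-y))) :=
          mul_le_mul_of_nonneg_left hed (sq_nonneg u)
      _ ≤ u^2 * ((|lam * p| * (1/2 + |u|)) * (2 * (Real.exp 1 * Real.exp (-(1/16) * u^2)))) := by
          apply mul_le_mul_of_nonneg_left _ (sq_nonneg u)
          apply mul_le_mul hxy (by linarith) (by positivity) (by positivity)
      _ = |lam * p| * (2 * Real.exp 1) * ((u^2 * (1/2 + |u|)) * Real.exp (-(1/16) * u^2)) := by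
          ring
      _ ≤ |lam * p| * (2 * Real.exp 1) * ((1 + u^4) * Real.exp (-(1/16) * u^2)) := by
          apply mul_le_mul_of_nonneg_left _ (by positivity)
          exact mul_le_mul_of_nonneg_right (u_cube_le u) (Real.exp_pos _).le
      _ = lam * |p| * (2 * Real.exp 1) * ((1 + u^4) * Real.exp (-(1/16) * u^2)) := by
          rw [habs_s]
  -- bound on the integral of G1
  have hG1int : |∫ u : ℝ, G1 u| ≤ lam * |p| * (2 * Real.exp 1) * K0 := by
    have h1 : (∫ u : ℝ, G1 u) = ∫ u : ℝ, (G1 u - G2 u) := by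
      rw [integral_sub hIG1 hIG2, hG2zero, sub_zero]
    rw [h1]
    calc |∫ u : ℝ, (G1 u - G2 u)| ≤ ∫ u : ℝ, |G1 u - G2 u| := by
          simpa [Real.norm_eq_abs] using
            norm_integral_le_integral_norm (fun u : ℝ => G1 u - G2 u)
      _ ≤ ∫ u : ℝ, lam * |p| * (2 * Real.exp 1) * ((1 + u^4) * Real.exp (-(1/16) * u^2)) := by
          apply integral_mono ((hIG1.sub hIG2).abs) (int_master.const_mul _)
          intro u; exact hdiffbnd u
      _ = lam * |p| * (2 * Real.exp 1) * K0 := by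
          rw [integral_const_mul]; rfl
  -- combine
  have hmbnd : |(1 + lam)/64 * ∫ u : ℝ, G1 u| ≤ Real.exp 1 * K0 * (lam * |p|) := by
    rw [abs_mul]
    have h64 : |(1 + lam)/64| ≤ 1/32 := by
      rw [abs_of_pos (by linarith : (0:ℝ) < (1 + lam)/64)]; linarith
    calc |(1 + lam)/64| * |∫ u : ℝ, G1 u|
        ≤ (1/32) * (lam * |p| * (2 * Real.exp 1) * K0) := by
          apply mul_le_mul h64 hG1int (abs_nonneg _) (by norm_num)
      _ = (1/16) * (Real.exp 1 * K0 * (lam * |p|)) := by ring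
      _ ≤ Real.exp 1 * K0 * (lam * |p|) := by
          have hE : 0 ≤ Real.exp 1 * K0 * (lam * |p|) :=
            mul_nonneg (mul_nonneg (Real.exp_pos 1).le K0_nonneg)
              (mul_nonneg hl0.le (abs_nonneg p))
          linarith
  have hfinal : d * (∫ q : ℝ, (q - p) * Jker lam p q) ≥ -(Real.exp 1 * K0 * (lam * |p|)) := by
    rw [hm]
    have h1 : |d * ((1 + lam)/64 * ∫ u : ℝ, G1 u)| ≤ Real.exp 1 * K0 * (lam * |p|) := by
      rw [abs_mul]
      calc |d| * |(1 + lam)/64 * ∫ u : ℝ, G1 u|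
          ≤ 1 * (Real.exp 1 * K0 * (lam * |p|)) := by
            apply mul_le_mul hd hmbnd (abs_nonneg _) (by norm_num)
        _ = Real.exp 1 * K0 * (lam * |p|) := by ring
    have := abs_le.1 h1
    linarith [this.1]
  linarith [hAc]

theorem stmt3 (V : ℝ → ℝ) (hV : ContDiff ℝ 1 V) (hper : ∀ x, V (x + 1) = V x)
    (hVnn : ∀ x, 0 ≤ V x) :
    ∃ C > 0, ∀ lam ∈ Set.Ioo (0:ℝ) 1, ∀ x ∈ Set.Ico (0:ℝ) 1, ∀ p : ℝ,
      |p| ≤ lam⁻¹ → Aminus V lam x p ≤ C * lam * |p| := by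
  refine ⟨1 + Real.exp 1 * K0, by nlinarith [Real.exp_pos 1, K0_nonneg], ?_⟩
  intro lam hlam x hx p hp
  have hAeq : Acal V lam x p =
      ∫ q : ℝ, (Real.sqrt (q^2 + 2 * V x) - Real.sqrt (p^2 + 2 * V x)) * Jker lam p q := by
    unfold Acal
    congr 1
    funext q
    rw [show 2 * Ham V x q = q^2 + 2 * V x by unfold Ham; ring,
        show 2 * Ham V x p = p^2 + 2 * V x by unfold Ham; ring]
  have hcore := core_est (2 * V x) lam p (by linarith [hVnn x]) hlam.1 hlam.2 hp
  have hlp : 0 ≤ lam * |p| := mul_nonneg hlam.1.le (abs_nonneg p)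
  unfold Aminus
  rw [hAeq]
  apply max_le
  · calc -(∫ q : ℝ, (Real.sqrt (q^2 + 2 * V x) - Real.sqrt (p^2 + 2 * V x)) * Jker lam p q)
        ≤ Real.exp 1 * K0 * (lam * |p|) := hcore
      _ ≤ (1 + Real.exp 1 * K0) * lam * |p| := by nlinarith [Real.exp_pos 1, K0_nonneg]
  · have : 0 < 1 + Real.exp 1 * K0 := by nlinarith [Real.exp_pos 1, K0_nonneg]
    nlinarith
end

section
/- There exists a constant C > 0 such that for all λ ∈ (0,1) and all (x,p) ∈ [0,1) × ℝ, |𝒜_λ(x,p)/ℰ_λ(p) + 2λ|p|/(1+λ)| ≤ C. -/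
open MeasureTheory Real

/-- The escape rate `ℰ_λ(p)`. -/
noncomputable def Erate (lam p : ℝ) : ℝ := ∫ p' : ℝ, Jker lam p p'

/- ## Auxiliary lemmas -/

lemma sqrtAdd {A B : ℝ} (hA : 0 ≤ A) (hB : 0 ≤ B) :
    Real.sqrt (A + B) ≤ Real.sqrt A + Real.sqrt B := by
  have h3 := Real.sqrt_nonneg A
  have h4 := Real.sqrt_nonneg B
  calc Real.sqrt (A + B) ≤ Real.sqrt ((Real.sqrt A + Real.sqrt B)^2) := by
        apply Real.sqrt_le_sqrt
        nlinarith [Real.sq_sqrt hA, Real.sq_sqrt hB, mul_nonneg h3 h4]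
    _ = Real.sqrt A + Real.sqrt B := Real.sqrt_sq (by positivity)

lemma ig2 : Integrable (fun u : ℝ => Real.exp (-(1/2) * u^2)) :=
  integrable_exp_neg_mul_sq (by norm_num)

lemma ig4 : Integrable (fun u : ℝ => Real.exp (-(1/4) * u^2)) :=
  integrable_exp_neg_mul_sq (by norm_num)

lemma bd1 (u : ℝ) : |u| * Real.exp (-(1/2) * u^2) ≤ Real.exp (-(1/4) * u^2) := by
  have h : |u| ≤ Real.exp ((1/4) * u^2) := by
    nlinarith [Real.add_one_le_exp ((1/4) * u^2), sq_nonneg (|u| - 2), sq_abs u]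
  calc |u| * Real.exp (-(1/2) * u^2) ≤ Real.exp ((1/4) * u^2) * Real.exp (-(1/2) * u^2) :=
        mul_le_mul_of_nonneg_right h (Real.exp_pos _).le
    _ = Real.exp (-(1/4) * u^2) := by rw [← Real.exp_add]; congr 1; ring

lemma bd2 (u : ℝ) : u^2 * Real.exp (-(1/2) * u^2) ≤ 4 * Real.exp (-(1/4) * u^2) := by
  have h : u^2 ≤ 4 * Real.exp ((1/4) * u^2) := by
    nlinarith [Real.add_one_le_exp ((1/4) * u^2)]
  calc u^2 * Real.exp (-(1/2) * u^2) ≤ (4 * Real.exp ((1/4) * u^2)) * Real.exp (-(1/2) * u^2) :=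
        mul_le_mul_of_nonneg_right h (Real.exp_pos _).le
    _ = 4 * Real.exp (-(1/4) * u^2) := by rw [mul_assoc, ← Real.exp_add]; congr 2; ring

lemma contE : Continuous (fun u : ℝ => Real.exp (-(1/2) * u^2)) := by fun_prop

lemma iabs : Integrable (fun u : ℝ => |u| * Real.exp (-(1/2) * u^2)) := by
  refine ig4.mono' (Continuous.aestronglyMeasurable (by fun_prop)) (ae_of_all _ fun u => ?_)
  rw [Real.norm_eq_abs, abs_of_nonneg (by positivity)]
  exact bd1 u

lemma isq : Integrable (fun u : ℝ => u^2 * Real.exp (-(1/2) * u^2)) := by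
  refine (ig4.const_mul 4).mono' (Continuous.aestronglyMeasurable (by fun_prop))
    (ae_of_all _ fun u => ?_)
  rw [Real.norm_eq_abs, abs_of_nonneg (by positivity)]
  exact bd2 u

lemma iG (m : ℝ) : Integrable (fun u : ℝ => |u - m| * Real.exp (-(1/2) * u^2)) := by
  refine (iabs.add (ig2.const_mul |m|)).mono'
    (Continuous.aestronglyMeasurable (by fun_prop)) (ae_of_all _ fun u => ?_)
  rw [Real.norm_eq_abs, abs_of_nonneg (by positivity)]
  have h : |u - m| ≤ |u| + |m| := by
    rw [sub_eq_add_neg]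
    exact (abs_add_le u (-m)).trans (by rw [abs_neg])
  simp only [Pi.add_apply]
  nlinarith [Real.exp_pos (-(1/2) * u^2)]

lemma iN (m : ℝ) : Integrable (fun u : ℝ => |u| * (|u - m| * Real.exp (-(1/2) * u^2))) := by
  refine (isq.add (iabs.const_mul |m|)).mono'
    (Continuous.aestronglyMeasurable (by fun_prop)) (ae_of_all _ fun u => ?_)
  rw [Real.norm_eq_abs, abs_of_nonneg (by positivity)]
  have h : |u - m| ≤ |u| + |m| := by
    rw [sub_eq_add_neg]
    exact (abs_add_le u (-m)).trans (by rw [abs_neg])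
  simp only [Pi.add_apply]
  nlinarith [Real.exp_pos (-(1/2) * u^2), abs_nonneg u, sq_abs u,
    mul_le_mul_of_nonneg_right (mul_le_mul_of_nonneg_left h (abs_nonneg u))
      (Real.exp_pos (-(1/2) * u^2)).le]

lemma iid : Integrable (fun u : ℝ => u * Real.exp (-(1/2) * u^2)) := by
  refine iabs.mono' (Continuous.aestronglyMeasurable (by fun_prop)) (ae_of_all _ fun u => ?_)
  rw [Real.norm_eq_abs, abs_mul, abs_of_nonneg (Real.exp_pos _).le]

lemma val2 : ∫ u : ℝ, Real.exp (-(1/2) * u^2) = Real.sqrt (2*π) := by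
  rw [integral_gaussian]
  congr 1
  ring

lemma val4 : ∫ u : ℝ, Real.exp (-(1/4) * u^2) ≤ 4 := by
  rw [integral_gaussian, show π / (1/4 : ℝ) = 4 * π by ring]
  calc Real.sqrt (4*π) ≤ Real.sqrt 16 := Real.sqrt_le_sqrt (by nlinarith [Real.pi_le_four])
    _ = 4 := by
        rw [show (16:ℝ) = 4^2 by norm_num, Real.sqrt_sq]; norm_num

lemma val_odd : ∫ u : ℝ, u * Real.exp (-(1/2) * u^2) = 0 := by
  have h : ∫ u : ℝ, (-u) * Real.exp (-(1/2) * (-u)^2) = ∫ u : ℝ, u * Real.exp (-(1/2) * u^2) :=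
    integral_neg_eq_self (fun u : ℝ => u * Real.exp (-(1/2) * u^2)) volume
  simp only [neg_sq] at h
  rw [show (fun u : ℝ => -u * Real.exp (-(1/2) * u^2))
      = fun u : ℝ => -(u * Real.exp (-(1/2) * u^2)) from funext fun u => by ring,
    integral_neg] at h
  linarith

lemma sqrt_two_pi_ge_one : (1:ℝ) ≤ Real.sqrt (2*π) := by
  rw [show (1:ℝ) = Real.sqrt 1 by simp]
  exact Real.sqrt_le_sqrt (by nlinarith [Real.pi_gt_three])

lemma G_ge_abs (m : ℝ) : |m| ≤ ∫ u : ℝ, |u - m| * Real.exp (-(1/2) * u^2) := by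
  have h1 : ∫ u : ℝ, (m - u) * Real.exp (-(1/2) * u^2) = m * Real.sqrt (2*π) := by
    rw [show (fun u : ℝ => (m - u) * Real.exp (-(1/2) * u^2))
        = fun u : ℝ => m * Real.exp (-(1/2) * u^2) - u * Real.exp (-(1/2) * u^2) from
      funext fun u => by ring]
    rw [integral_sub (ig2.const_mul m) iid, integral_const_mul, val2, val_odd, sub_zero]
  have h2 : |∫ u : ℝ, (m - u) * Real.exp (-(1/2) * u^2)|
      ≤ ∫ u : ℝ, |u - m| * Real.exp (-(1/2) * u^2) := by
    calc |∫ u : ℝ, (m - u) * Real.exp (-(1/2) * u^2)|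
        = ‖∫ u : ℝ, (m - u) * Real.exp (-(1/2) * u^2)‖ := (Real.norm_eq_abs _).symm
      _ ≤ ∫ u : ℝ, ‖(m - u) * Real.exp (-(1/2) * u^2)‖ :=
          norm_integral_le_integral_norm _
      _ = ∫ u : ℝ, |u - m| * Real.exp (-(1/2) * u^2) := by
          congr 1; funext u
          rw [Real.norm_eq_abs, abs_mul, abs_of_nonneg (Real.exp_pos _).le, abs_sub_comm]
  rw [h1, abs_mul] at h2
  have h3 := sqrt_two_pi_ge_one
  have h4 : |Real.sqrt (2*π)| = Real.sqrt (2*π) := abs_of_nonneg (Real.sqrt_nonneg _)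
  rw [h4] at h2
  nlinarith [abs_nonneg m]

lemma G_ge_small {m : ℝ} (hm : |m| ≤ 1) :
    Real.exp (-5) ≤ ∫ u : ℝ, |u - m| * Real.exp (-(1/2) * u^2) := by
  have hmle : m ≤ 1 := le_trans (le_abs_self m) hm
  have key : Real.exp (-5) * (volume (Set.Icc (2:ℝ) 3)).toReal
      ≤ ∫ u in Set.Icc (2:ℝ) 3, |u - m| * Real.exp (-(1/2) * u^2) := by
    refine setIntegral_ge_of_const_le_real measurableSet_Icc (by rw [Real.volume_Icc]; exact ENNReal.ofReal_ne_top) (fun u hu => ?_)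
      ((iG m).integrableOn)
    obtain ⟨hu2, hu3⟩ := hu
    have h1 : (1:ℝ) ≤ |u - m| := by
      rw [abs_of_nonneg (by linarith)]
      linarith
    have h2 : Real.exp (-5) ≤ Real.exp (-(1/2) * u^2) := by
      apply Real.exp_le_exp.2
      nlinarith
    calc Real.exp (-5) = 1 * Real.exp (-5) := by ring
      _ ≤ |u - m| * Real.exp (-(1/2) * u^2) :=
          mul_le_mul h1 h2 (Real.exp_pos _).le (by linarith)
  have hvol : (volume (Set.Icc (2:ℝ) 3)).toReal = 1 := by
    rw [Real.volume_Icc]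
    norm_num
  rw [hvol, mul_one] at key
  exact key.trans (setIntegral_le_integral (iG m) (ae_of_all _ fun u => by positivity))

lemma N_le (m : ℝ) :
    (∫ u : ℝ, |u| * (|u - m| * Real.exp (-(1/2) * u^2))) ≤ 16 + 4 * |m| := by
  have mono : (∫ u : ℝ, |u| * (|u - m| * Real.exp (-(1/2) * u^2)))
      ≤ ∫ u : ℝ, (u^2 * Real.exp (-(1/2) * u^2) + |m| * (|u| * Real.exp (-(1/2) * u^2))) := by
    refine integral_mono (iN m) (isq.add (iabs.const_mul |m|)) (fun u => ?_)
    have h : |u - m| ≤ |u| + |m| := by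
      rw [sub_eq_add_neg]
      exact (abs_add_le u (-m)).trans (by rw [abs_neg])
    nlinarith [Real.exp_pos (-(1/2) * u^2), abs_nonneg u, sq_abs u,
      mul_le_mul_of_nonneg_right (mul_le_mul_of_nonneg_left h (abs_nonneg u))
        (Real.exp_pos (-(1/2) * u^2)).le]
  rw [integral_add isq (iabs.const_mul |m|), integral_const_mul] at mono
  have h1 : (∫ u : ℝ, u^2 * Real.exp (-(1/2) * u^2)) ≤ 16 := by
    calc (∫ u : ℝ, u^2 * Real.exp (-(1/2) * u^2))
        ≤ ∫ u : ℝ, 4 * Real.exp (-(1/4) * u^2) := integral_mono isq (ig4.const_mul 4) bd2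
      _ = 4 * ∫ u : ℝ, Real.exp (-(1/4) * u^2) := integral_const_mul _ _
      _ ≤ 16 := by nlinarith [val4]
  have h2 : (∫ u : ℝ, |u| * Real.exp (-(1/2) * u^2)) ≤ 4 :=
    (integral_mono iabs ig4 bd1).trans val4
  nlinarith [abs_nonneg m]

lemma G_pos (m : ℝ) : Real.exp (-5) ≤ ∫ u : ℝ, |u - m| * Real.exp (-(1/2) * u^2) := by
  rcases le_or_gt |m| 1 with h | h
  · exact G_ge_small h
  · refine le_trans ?_ (G_ge_abs m)
    have : Real.exp (-5) ≤ 1 := Real.exp_le_one_iff.2 (by norm_num)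
    linarith

lemma NG (m : ℝ) : (∫ u : ℝ, |u| * (|u - m| * Real.exp (-(1/2) * u^2)))
    ≤ (20 * Real.exp 5) * ∫ u : ℝ, |u - m| * Real.exp (-(1/2) * u^2) := by
  have hN := N_le m
  have he1 : (1:ℝ) ≤ Real.exp 5 := Real.one_le_exp (by norm_num)
  rcases le_or_gt |m| 1 with h | h
  · have hG := G_ge_small h
    have hmul : Real.exp 5 * Real.exp (-5) = 1 := by
      rw [← Real.exp_add]; norm_num
    nlinarith [Real.exp_pos 5, abs_nonneg m,
      mul_le_mul_of_nonneg_left hG (by positivity : (0:ℝ) ≤ 20 * Real.exp 5)]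
  · have hG := G_ge_abs m
    nlinarith [abs_nonneg m,
      mul_le_mul_of_nonneg_left hG (by positivity : (0:ℝ) ≤ 20 * Real.exp 5),
      mul_le_mul_of_nonneg_right he1 (le_trans (abs_nonneg m) hG)]

lemma comp_integral (f : ℝ → ℝ) {b : ℝ} (hb : 0 < b) (c : ℝ) :
    ∫ p' : ℝ, f (b * p' - c) = b⁻¹ * ∫ u : ℝ, f u := by
  have h1 : (∫ p' : ℝ, f (b * p' - c)) = ∫ p' : ℝ, (fun y => f (y - c)) (b * p') := rfl
  rw [h1, Measure.integral_comp_mul_left (fun y => f (y - c)) b,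
    integral_sub_right_eq_self f c, smul_eq_mul, abs_of_pos (inv_pos.2 hb)]

lemma comp_integrable {f : ℝ → ℝ} (hf : Integrable f) {b : ℝ} (hb : b ≠ 0) (c : ℝ) :
    Integrable fun p' : ℝ => f (b * p' - c) :=
  (hf.comp_sub_right c).comp_mul_left' hb

lemma iB (m q r s : ℝ) : Integrable (fun u : ℝ =>
    (|u| * q + r) * (s * (|u - m| * Real.exp (-(1/2) * u^2)))) :=
  (((iN m).const_mul (q*s)).add ((iG m).const_mul (r*s))).congr
    (ae_of_all _ fun u => by simp only [Pi.add_apply]; ring)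

lemma iBval (m q r s : ℝ) : (∫ u : ℝ,
    (|u| * q + r) * (s * (|u - m| * Real.exp (-(1/2) * u^2))))
    = q * s * (∫ u : ℝ, |u| * (|u - m| * Real.exp (-(1/2) * u^2)))
      + r * s * (∫ u : ℝ, |u - m| * Real.exp (-(1/2) * u^2)) := by
  rw [show (fun u : ℝ => (|u| * q + r) * (s * (|u - m| * Real.exp (-(1/2) * u^2))))
      = fun u : ℝ => (q*s) * (|u| * (|u - m| * Real.exp (-(1/2) * u^2)))
        + (r*s) * (|u - m| * Real.exp (-(1/2) * u^2)) from funext fun u => by ring]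
  rw [integral_add ((iN m).const_mul (q*s)) ((iG m).const_mul (r*s)),
    integral_const_mul, integral_const_mul]

set_option maxHeartbeats 1000000 in
theorem stmt4 (V : ℝ → ℝ) (hV : ContDiff ℝ 1 V) (hper : ∀ x, V (x + 1) = V x)
    (hVnn : ∀ x, 0 ≤ V x) :
    ∃ C > 0, ∀ lam ∈ Set.Ioo (0:ℝ) 1, ∀ x ∈ Set.Ico (0:ℝ) 1, ∀ p : ℝ,
      |Acal V lam x p / Erate lam p + 2 * lam * |p| / (1 + lam)| ≤ C := by
  obtain ⟨x₀, -, hx₀⟩ := isCompact_Icc.exists_isMaxOn (Set.nonempty_Icc.2 zero_le_one)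
    (hV.continuous.continuousOn (s := Set.Icc (0:ℝ) 1))
  set M := V x₀ with hMdef
  have hM0 : 0 ≤ M := hVnn x₀
  refine ⟨40 * Real.exp 5 + Real.sqrt (2*M) + 1, by positivity, ?_⟩
  rintro lam ⟨hl0, hl1⟩ x hx p
  have hVx : V x ≤ M := hx₀ ⟨hx.1, hx.2.le⟩
  set a : ℝ := (1 - lam)/2 with ha
  set b : ℝ := (1 + lam)/2 with hb
  set c : ℝ := (1 + lam)/64 with hc
  set m : ℝ := lam * p with hm
  have hb0 : 0 < b := by rw [hb]; linarith
  have hbne : b ≠ 0 := ne_of_gt hb0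
  have hbinv : (0:ℝ) < b⁻¹ := inv_pos.2 hb0
  have hb2 : b⁻¹ ≤ 2 := by
    have h : (1:ℝ)/2 ≤ b := by rw [hb]; linarith
    have h2 := one_div_le_one_div_of_le (by norm_num : (0:ℝ) < 1/2) h
    rw [one_div] at h2
    linarith
  have ha0 : 0 ≤ a := by rw [ha]; linarith
  have hc0 : 0 < c := by rw [hc]; linarith
  set s₀ : ℝ := 2 * lam * |p| / (1 + lam) with hs₀
  have hs₀eq : s₀ = lam * |p| * b⁻¹ := by
    rw [hs₀, hb]
    field_simp
  have hs₀0 : 0 ≤ s₀ := by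
    rw [hs₀]
    positivity
  -- kernel rewrite
  have hJ : ∀ p' : ℝ, Jker lam p p'
      = (c/b) * (|b * p' - a * p - m| * Real.exp (-(1/2) * (b * p' - a * p)^2)) := by
    intro p'
    unfold Jker
    rw [show ((1 - lam)/2 * p - (1 + lam)/2 * p')^2 = (b * p' - a * p)^2 by
      rw [ha, hb]; ring]
    rw [show b * p' - a * p - m = b * (p' - p) by rw [ha, hb, hm]; ring]
    rw [abs_mul, abs_of_pos hb0]
    rw [hc, hb]
    field_simp
  have hJnn : ∀ p' : ℝ, 0 ≤ Jker lam p p' := by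
    intro p'
    rw [hJ p']
    positivity
  have hJint : Integrable (fun p' : ℝ => Jker lam p p') := by
    rw [show (fun p' : ℝ => Jker lam p p')
        = fun p' : ℝ => (fun u : ℝ => (c/b) * (|u - m| * Real.exp (-(1/2) * u^2)))
            (b * p' - a * p) from funext fun p' => hJ p']
    exact comp_integrable ((iG m).const_mul (c/b)) hbne (a*p)
  set Gm : ℝ := ∫ u : ℝ, |u - m| * Real.exp (-(1/2) * u^2) with hGm
  set Nm : ℝ := ∫ u : ℝ, |u| * (|u - m| * Real.exp (-(1/2) * u^2)) with hNm
  have hGpos : 0 < Gm := lt_of_lt_of_le (Real.exp_pos (-5)) (G_pos m)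
  have hNnn : 0 ≤ Nm := integral_nonneg fun u => by positivity
  have hcompE := comp_integral
    (fun u : ℝ => (c/b) * (|u - m| * Real.exp (-(1/2) * u^2))) hb0 (a*p)
  have hErate : Erate lam p = (c/b) * b⁻¹ * Gm := by
    unfold Erate
    rw [show (fun p' : ℝ => Jker lam p p')
        = fun p' : ℝ => (c/b) * (|b * p' - a * p - m|
            * Real.exp (-(1/2) * (b * p' - a * p)^2)) from funext fun p' => hJ p']
    rw [hcompE, integral_const_mul]
    ring
  have hEpos : 0 < Erate lam p := by
    rw [hErate]
    positivity
  -- sqrt bounds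
  have hl : ∀ q : ℝ, |q| ≤ Real.sqrt (2 * Ham V x q) := by
    intro q
    rw [show 2 * Ham V x q = q^2 + 2 * V x from by unfold Ham; ring, ← Real.sqrt_sq_eq_abs]
    exact Real.sqrt_le_sqrt (by linarith [hVnn x])
  have hu : ∀ q : ℝ, Real.sqrt (2 * Ham V x q) ≤ |q| + Real.sqrt (2*M) := by
    intro q
    rw [show 2 * Ham V x q = q^2 + 2 * V x from by unfold Ham; ring]
    calc Real.sqrt (q^2 + 2 * V x) ≤ Real.sqrt (q^2) + Real.sqrt (2 * V x) :=
          sqrtAdd (sq_nonneg q) (by linarith [hVnn x])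
      _ ≤ |q| + Real.sqrt (2*M) := by
          rw [Real.sqrt_sq_eq_abs]
          exact add_le_add le_rfl (Real.sqrt_le_sqrt (by linarith))
  -- pointwise bound
  have habs : ∀ p' : ℝ, abs (b * |p'| - a * |p|) ≤ |b * p' - a * p| := by
    intro p'
    have h := abs_abs_sub_abs_le_abs_sub (b * p') (a * p)
    rwa [abs_mul, abs_mul, abs_of_pos hb0, abs_of_nonneg ha0] at h
  have hkey1 : ∀ p' : ℝ, |p'| - a * |p| * b⁻¹ ≤ |b * p' - a * p| * b⁻¹ := by
    intro p'
    have h := (abs_le.1 (habs p')).2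
    have h2 := mul_le_mul_of_nonneg_right h hbinv.le
    rw [show (b * |p'| - a * |p|) * b⁻¹ = |p'| * (b * b⁻¹) - a * |p| * b⁻¹ by ring,
      mul_inv_cancel₀ hbne, mul_one] at h2
    exact h2
  have hkey2 : ∀ p' : ℝ, -(|b * p' - a * p| * b⁻¹) ≤ |p'| - a * |p| * b⁻¹ := by
    intro p'
    have h := (abs_le.1 (habs p')).1
    have h2 := mul_le_mul_of_nonneg_right h hbinv.le
    rw [show (b * |p'| - a * |p|) * b⁻¹ = |p'| * (b * b⁻¹) - a * |p| * b⁻¹ by ring,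
      mul_inv_cancel₀ hbne, mul_one, neg_mul] at h2
    exact h2
  have hlam : lam * |p| * b⁻¹ = |p| - a * |p| * b⁻¹ := by
    have hba : b - a = lam := by rw [ha, hb]; ring
    rw [← hba]
    field_simp
  have hpt : ∀ p' : ℝ,
      |Real.sqrt (2 * Ham V x p') - Real.sqrt (2 * Ham V x p) + s₀|
        ≤ |b * p' - a * p| * b⁻¹ + Real.sqrt (2*M) := by
    intro p'
    have l1 := hl p'
    have u1 := hu p'
    have l2 := hl p
    have u2 := hu p
    rw [hs₀eq, abs_le]
    constructor
    · linarith [hkey2 p', hlam, l1, u2]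
    · linarith [hkey1 p', hlam, u1, l2]
  -- integrability of A integrand
  have hAmeas : AEStronglyMeasurable
      (fun p' : ℝ => (Real.sqrt (2 * Ham V x p') - Real.sqrt (2 * Ham V x p)) * Jker lam p p')
      volume := by
    apply Continuous.aestronglyMeasurable
    unfold Jker Ham
    fun_prop
  have hAint : Integrable (fun p' : ℝ =>
      (Real.sqrt (2 * Ham V x p') - Real.sqrt (2 * Ham V x p)) * Jker lam p p') := by
    refine Integrable.mono' (comp_integrable (iB m b⁻¹ (Real.sqrt (2*M) + s₀) (c/b)) hbne (a*p))
      hAmeas (ae_of_all _ fun p' => ?_)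
    have hD : |Real.sqrt (2 * Ham V x p') - Real.sqrt (2 * Ham V x p)|
        ≤ |b * p' - a * p| * b⁻¹ + (Real.sqrt (2*M) + s₀) := by
      have h1 := hpt p'
      have h2 : |Real.sqrt (2 * Ham V x p') - Real.sqrt (2 * Ham V x p)|
          ≤ |Real.sqrt (2 * Ham V x p') - Real.sqrt (2 * Ham V x p) + s₀| + s₀ := by
        calc |Real.sqrt (2 * Ham V x p') - Real.sqrt (2 * Ham V x p)|
            = |(Real.sqrt (2 * Ham V x p') - Real.sqrt (2 * Ham V x p) + s₀) + (-s₀)| := by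
              congr 1; ring
          _ ≤ |Real.sqrt (2 * Ham V x p') - Real.sqrt (2 * Ham V x p) + s₀| + |(-s₀)| :=
              abs_add_le _ _
          _ = |Real.sqrt (2 * Ham V x p') - Real.sqrt (2 * Ham V x p) + s₀| + s₀ := by
              rw [abs_neg, abs_of_nonneg hs₀0]
      linarith
    rw [Real.norm_eq_abs, abs_mul, abs_of_nonneg (hJnn p'), hJ p']
    calc |Real.sqrt (2 * Ham V x p') - Real.sqrt (2 * Ham V x p)|
          * ((c/b) * (|b * p' - a * p - m| * Real.exp (-(1/2) * (b * p' - a * p)^2)))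
        ≤ (|b * p' - a * p| * b⁻¹ + (Real.sqrt (2*M) + s₀))
          * ((c/b) * (|b * p' - a * p - m| * Real.exp (-(1/2) * (b * p' - a * p)^2))) := by
          apply mul_le_mul_of_nonneg_right hD
          positivity
      _ = _ := rfl
  -- main estimate
  have hAeq : Acal V lam x p + s₀ * Erate lam p
      = ∫ p' : ℝ, ((Real.sqrt (2 * Ham V x p') - Real.sqrt (2 * Ham V x p)) * Jker lam p p'
          + s₀ * Jker lam p p') := by
    unfold Acal Erate
    rw [integral_add hAint (hJint.const_mul s₀), integral_const_mul]
  have hcompB := comp_integral (fun u : ℝ => (|u| * b⁻¹ + Real.sqrt (2*M))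
      * ((c/b) * (|u - m| * Real.exp (-(1/2) * u^2)))) hb0 (a*p)
  have hbound : |Acal V lam x p + s₀ * Erate lam p|
      ≤ ∫ p' : ℝ, (|b * p' - a * p| * b⁻¹ + Real.sqrt (2*M))
          * ((c/b) * (|b * p' - a * p - m|
            * Real.exp (-(1/2) * (b * p' - a * p)^2))) := by
    rw [hAeq, ← Real.norm_eq_abs]
    refine norm_integral_le_of_norm_le (comp_integrable (iB m b⁻¹ (Real.sqrt (2*M)) (c/b)) hbne (a*p))
      (ae_of_all _ fun p' => ?_)
    rw [Real.norm_eq_abs, show (Real.sqrt (2 * Ham V x p') - Real.sqrt (2 * Ham V x p)) * Jker lam p p'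
        + s₀ * Jker lam p p'
        = (Real.sqrt (2 * Ham V x p') - Real.sqrt (2 * Ham V x p) + s₀) * Jker lam p p' by ring]
    rw [abs_mul, abs_of_nonneg (hJnn p'), hJ p']
    apply mul_le_mul_of_nonneg_right (hpt p')
    positivity
  have hval : (∫ p' : ℝ, (|b * p' - a * p| * b⁻¹ + Real.sqrt (2*M))
          * ((c/b) * (|b * p' - a * p - m|
            * Real.exp (-(1/2) * (b * p' - a * p)^2))))
      = b⁻¹ * (b⁻¹ * (c/b) * Nm + Real.sqrt (2*M) * (c/b) * Gm) := by
    rw [hcompB, iBval]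
  have hfinal : |Acal V lam x p + s₀ * Erate lam p|
      ≤ (40 * Real.exp 5 + Real.sqrt (2*M)) * Erate lam p := by
    rw [hval] at hbound
    refine hbound.trans ?_
    rw [hErate]
    have hNG := NG m
    rw [← hNm, ← hGm] at hNG
    have hcb : 0 < c/b := div_pos hc0 hb0
    have e5 : (0:ℝ) < Real.exp 5 := Real.exp_pos 5
    have hsM : (0:ℝ) ≤ Real.sqrt (2*M) := Real.sqrt_nonneg _
    have step1 : b⁻¹ * Nm ≤ 40 * Real.exp 5 * Gm := by
      calc b⁻¹ * Nm ≤ 2 * Nm := mul_le_mul_of_nonneg_right hb2 hNnn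
        _ ≤ 2 * ((20 * Real.exp 5) * Gm) := by linarith
        _ = 40 * Real.exp 5 * Gm := by ring
    calc b⁻¹ * (b⁻¹ * (c/b) * Nm + Real.sqrt (2*M) * (c/b) * Gm)
        = (c/b) * b⁻¹ * (b⁻¹ * Nm) + Real.sqrt (2*M) * ((c/b) * b⁻¹ * Gm) := by ring
      _ ≤ (c/b) * b⁻¹ * (40 * Real.exp 5 * Gm) + Real.sqrt (2*M) * ((c/b) * b⁻¹ * Gm) := by
          have : 0 ≤ (c/b) * b⁻¹ := by positivity
          nlinarith [mul_le_mul_of_nonneg_left step1 this]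
      _ = (40 * Real.exp 5 + Real.sqrt (2*M)) * ((c/b) * b⁻¹ * Gm) := by ring
  -- conclude
  have hdiv : Acal V lam x p / Erate lam p + s₀
      = (Acal V lam x p + s₀ * Erate lam p) / Erate lam p := by
    field_simp
  rw [hdiv, abs_div, abs_of_pos hEpos, div_le_iff₀ hEpos]
  calc |Acal V lam x p + s₀ * Erate lam p|
      ≤ (40 * Real.exp 5 + Real.sqrt (2*M)) * Erate lam p := hfinal
    _ ≤ (40 * Real.exp 5 + Real.sqrt (2*M) + 1) * Erate lam p := by nlinarith [hEpos]
end

section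
/- For each integer m ≥ 0 there exists a constant C > 0 such that for all λ ∈ (0,1), all b ∈ ℝ, and all p ∈ ℝ with |p| ≤ b ≤ λ^{-1}, one has ∫_{|p'| ≥ b} (|p'| − b)^m · 𝒥_λ(p,p') dp' ≤ C · ∫_{|p'| ≥ b} 𝒥_λ(p,p') dp'. -/
open MeasureTheory Real

open Set
open MeasureTheory Real Set

lemma shiftIoi (f : ℝ → ℝ) (a b : ℝ) :
    ∫ x in Ioi a, f (x + b) = ∫ x in Ioi (a + b), f x := by
  rw [← integral_indicator measurableSet_Ioi, ← integral_indicator measurableSet_Ioi]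
  have h : ∀ x : ℝ, (Ioi a).indicator (fun y => f (y + b)) x
      = (Ioi (a + b)).indicator f (x + b) := by
    intro x
    by_cases hx : x ∈ Ioi a
    · rw [indicator_of_mem hx, indicator_of_mem (by simpa [mem_Ioi] using add_lt_add_right hx.out b)]
    · rw [indicator_of_notMem hx, indicator_of_notMem (by
        simp only [mem_Ioi] at hx ⊢; intro h; exact hx (by linarith))]
  simp_rw [h]
  exact integral_add_right_eq_self _ b

lemma setIntegral_Ici_shift (f : ℝ → ℝ) (b : ℝ) :
    ∫ x in Ici b, f x = ∫ s in Ioi 0, f (s + b) := by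
  rw [integral_Ici_eq_integral_Ioi, shiftIoi f 0 b, zero_add]

lemma setIntegral_Iic_reflect (f : ℝ → ℝ) (b : ℝ) :
    ∫ x in Iic (-b), f x = ∫ s in Ioi 0, f (-(s + b)) := by
  rw [← integral_comp_neg_Ioi, shiftIoi (fun x => f (-x)) 0 b, zero_add]

lemma integrableOn_Ici_shift {f : ℝ → ℝ} {b : ℝ}
    (h : IntegrableOn (fun s => f (s + b)) (Ioi 0)) : IntegrableOn f (Ici b) := by
  rw [integrableOn_Ici_iff_integrableOn_Ioi]
  refine (integrable_indicator_iff measurableSet_Ioi).1 ?_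
  have h2 := ((integrable_indicator_iff measurableSet_Ioi).2 h).comp_add_right (-b)
  have he : (fun x => (Ioi (0:ℝ)).indicator (fun s => f (s + b)) (x + -b))
      = (Ioi b).indicator f := by
    funext x
    by_cases hx : b < x
    · rw [indicator_of_mem (by simpa [mem_Ioi] using by linarith : x + -b ∈ Ioi (0:ℝ)),
        indicator_of_mem (mem_Ioi.2 hx)]
      ring_nf
    · rw [indicator_of_notMem (by simp [mem_Ioi]; linarith),
        indicator_of_notMem (by simpa [mem_Ioi] using hx)]
  rwa [he] at h2

lemma integrableOn_Iic_reflect {f : ℝ → ℝ} {b : ℝ}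
    (h : IntegrableOn (fun s => f (-(s + b))) (Ioi 0)) : IntegrableOn f (Iic (-b)) := by
  have h1 : IntegrableOn (fun x => f (-x)) (Ici b) := integrableOn_Ici_shift h
  rw [integrableOn_Iic_iff_integrableOn_Iio]
  refine (integrable_indicator_iff measurableSet_Iio).1 ?_
  have h1' : IntegrableOn (fun x => f (-x)) (Ioi b) :=
    by rwa [integrableOn_Ici_iff_integrableOn_Ioi] at h1
  have h2 := ((integrable_indicator_iff measurableSet_Ioi).2 h1').comp_neg
  have he : (fun x => (Ioi b).indicator (fun y => f (-y)) (-x)) = (Iio (-b)).indicator f := by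
    funext x
    by_cases hx : x < -b
    · rw [indicator_of_mem (by simp only [mem_Ioi]; linarith),
        indicator_of_mem (mem_Iio.2 hx), neg_neg]
    · rw [indicator_of_notMem (by simp only [mem_Ioi]; intro hc; exact hx (by linarith)),
        indicator_of_notMem (by simpa [mem_Iio] using hx)]
  rwa [he] at h2

noncomputable def gfun (n : ℕ) (c z d : ℝ) (s : ℝ) : ℝ :=
  s ^ n * ((s + c) * Real.exp (-(1/2) * (z + d * s) ^ 2))

lemma pow_le_factorial_mul_exp {x : ℝ} (hx : 0 ≤ x) (n : ℕ) :
    x ^ n ≤ n.factorial * Real.exp x := by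
  have h1 : x ^ n / n.factorial ≤ ∑ i ∈ Finset.range (n + 1), x ^ i / i.factorial :=
    Finset.single_le_sum (f := fun i => x ^ i / i.factorial)
      (fun i _ => by positivity) (Finset.self_mem_range_succ n)
  have h2 := Real.sum_le_exp_of_nonneg hx (n + 1)
  have h3 : (0:ℝ) < n.factorial := by exact_mod_cast n.factorial_pos
  calc x ^ n = (x ^ n / n.factorial) * n.factorial := by field_simp
    _ ≤ Real.exp x * n.factorial := mul_le_mul_of_nonneg_right (h1.trans h2) h3.le
    _ = n.factorial * Real.exp x := by ring

lemma gfun_integrableOn (n : ℕ) {c z d : ℝ} (hc : 0 ≤ c) (hz : 0 ≤ z) (hd : 1/4 ≤ d) :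
    IntegrableOn (gfun n c z d) (Ioi 0) := by
  have hmaj1 : IntegrableOn (fun s : ℝ => s ^ (n+1) * Real.exp (-(1/32) * s ^ 2)) (Ioi 0) := by
    have := integrableOn_rpow_mul_exp_neg_mul_sq (by norm_num : (0:ℝ) < 1/32)
      (s := ((n+1 : ℕ) : ℝ)) (by push_cast; linarith [Nat.cast_nonneg (α := ℝ) n])
    refine this.congr_fun (fun x hx => ?_) measurableSet_Ioi
    simp only [Real.rpow_natCast]
  have hmaj2 : IntegrableOn (fun s : ℝ => c * (s ^ n * Real.exp (-(1/32) * s ^ 2))) (Ioi 0) := by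
    have := integrableOn_rpow_mul_exp_neg_mul_sq (by norm_num : (0:ℝ) < 1/32)
      (s := ((n : ℕ) : ℝ)) (by push_cast; linarith [Nat.cast_nonneg (α := ℝ) n])
    refine (Integrable.const_mul (this.congr_fun (fun x hx => ?_) measurableSet_Ioi) c)
    simp only [Real.rpow_natCast]
  refine Integrable.mono' (hmaj1.add hmaj2) ?_ ?_
  · refine Continuous.aestronglyMeasurable (by unfold gfun; fun_prop)
  · filter_upwards [ae_restrict_mem measurableSet_Ioi] with s hs
    have hs0 : (0:ℝ) < s := hs
    have hE : Real.exp (-(1/2) * (z + d * s) ^ 2) ≤ Real.exp (-(1/32) * s ^ 2) := by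
      apply Real.exp_le_exp.2
      nlinarith [sq_nonneg (z + d * s), mul_nonneg hz (mul_nonneg (by linarith : (0:ℝ) ≤ d) hs0.le),
        mul_nonneg (mul_nonneg (by linarith : (0:ℝ) ≤ d - 1/4) (by linarith : (0:ℝ) ≤ d + 1/4)) (sq_nonneg s), sq_nonneg z]
    have hnn : 0 ≤ gfun n c z d s := by
      unfold gfun; positivity
    rw [Real.norm_eq_abs, abs_of_nonneg hnn]
    unfold gfun
    have h1 : s ^ n * ((s + c) * Real.exp (-(1/2) * (z + d * s) ^ 2))
        = s ^ (n+1) * Real.exp (-(1/2) * (z + d * s) ^ 2)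
          + c * (s ^ n * Real.exp (-(1/2) * (z + d * s) ^ 2)) := by ring
    rw [h1]
    exact add_le_add (mul_le_mul_of_nonneg_left hE (by positivity))
      (mul_le_mul_of_nonneg_left (mul_le_mul_of_nonneg_left hE (by positivity)) hc)

lemma gfun_pointwise (n : ℕ) {c z d : ℝ} (hc : 0 ≤ c) (hz : 0 ≤ z) (hd : 1/2 ≤ d)
    {s : ℝ} (hs : 0 ≤ s) :
    gfun n c z d s ≤ (n.factorial * Real.exp (8/3)) * gfun 0 c z (d/2) s := by
  have hd0 : (0:ℝ) ≤ d := by linarith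
  have hexp : s ≤ 8/3 + ((1/2) * (z + d * s) ^ 2 - (1/2) * (z + d/2 * s) ^ 2) := by
    nlinarith [sq_nonneg (s - 16/3), mul_nonneg (mul_nonneg hz hd0) hs,
      mul_nonneg (mul_nonneg (by linarith : (0:ℝ) ≤ d - 1/2) (by linarith : (0:ℝ) ≤ d + 1/2)) (sq_nonneg s)]
  have key : s ^ n * Real.exp (-(1/2) * (z + d * s) ^ 2)
      ≤ (n.factorial * Real.exp (8/3)) * Real.exp (-(1/2) * (z + d/2 * s) ^ 2) := by
    have h2 : Real.exp s * Real.exp (-(1/2) * (z + d * s) ^ 2)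
        ≤ Real.exp (8/3) * Real.exp (-(1/2) * (z + d/2 * s) ^ 2) := by
      rw [← Real.exp_add, ← Real.exp_add]
      exact Real.exp_le_exp.2 (by linarith)
    calc s ^ n * Real.exp (-(1/2) * (z + d * s) ^ 2)
        ≤ (n.factorial * Real.exp s) * Real.exp (-(1/2) * (z + d * s) ^ 2) :=
          mul_le_mul_of_nonneg_right (pow_le_factorial_mul_exp hs n) (Real.exp_nonneg _)
      _ = n.factorial * (Real.exp s * Real.exp (-(1/2) * (z + d * s) ^ 2)) := by ring
      _ ≤ n.factorial * (Real.exp (8/3) * Real.exp (-(1/2) * (z + d/2 * s) ^ 2)) :=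
          mul_le_mul_of_nonneg_left h2 (by positivity)
      _ = (n.factorial * Real.exp (8/3)) * Real.exp (-(1/2) * (z + d/2 * s) ^ 2) := by ring
  have h0 : (0:ℝ) ≤ s + c := by linarith
  calc gfun n c z d s = (s + c) * (s ^ n * Real.exp (-(1/2) * (z + d * s) ^ 2)) := by
        unfold gfun; ring
    _ ≤ (s + c) * ((n.factorial * Real.exp (8/3)) * Real.exp (-(1/2) * (z + d/2 * s) ^ 2)) :=
        mul_le_mul_of_nonneg_left key h0
    _ = (n.factorial * Real.exp (8/3)) * gfun 0 c z (d/2) s := by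
        unfold gfun; ring

lemma lemA (n : ℕ) {c z d : ℝ} (hc : 0 ≤ c) (hz : 0 ≤ z) (hd : 1/2 ≤ d) :
    ∫ s in Ioi (0:ℝ), gfun n c z d s
      ≤ (4 * n.factorial * Real.exp (8/3)) * ∫ s in Ioi (0:ℝ), gfun 0 c z d s := by
  have hd4 : (1:ℝ)/4 ≤ d := by linarith
  have hd42 : (1:ℝ)/4 ≤ d/2 := by linarith
  have I1 := gfun_integrableOn n hc hz hd4
  have I2 := gfun_integrableOn 0 hc hz hd42
  have I3 := gfun_integrableOn 0 hc hz hd4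
  have Ihalf := gfun_integrableOn 0 (by linarith : (0:ℝ) ≤ c/2) hz hd4
  set K : ℝ := n.factorial * Real.exp (8/3) with hK
  have hK0 : 0 ≤ K := by positivity
  -- step 1
  have step1 : ∫ s in Ioi (0:ℝ), gfun n c z d s
      ≤ K * ∫ s in Ioi (0:ℝ), gfun 0 c z (d/2) s := by
    rw [← integral_const_mul]
    refine setIntegral_mono_on I1 (I2.const_mul K) measurableSet_Ioi ?_
    exact fun s hs => gfun_pointwise n hc hz hd (le_of_lt hs)
  -- step 2 : substitution s = 2t
  set g : ℝ → ℝ := fun t => (2 * t + c) * Real.exp (-(1/2) * (z + d * t) ^ 2) with hg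
  have step2 : ∫ s in Ioi (0:ℝ), gfun 0 c z (d/2) s = 2 * ∫ t in Ioi (0:ℝ), g t := by
    have hfe : (fun s => gfun 0 c z (d/2) s) = fun s => g ((1/2) * s) := by
      funext s; simp only [gfun, hg, pow_zero, one_mul]; ring_nf
    rw [hfe, integral_comp_mul_left_Ioi g 0 (by norm_num : (0:ℝ) < 1/2)]
    norm_num
  -- step 3
  have hgint : IntegrableOn g (Ioi 0) := by
    have : g = fun t => 2 * gfun 0 (c/2) z d t := by
      funext t; simp only [gfun, hg, pow_zero, one_mul]; ring
    rw [this]; exact Ihalf.const_mul 2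
  have step3 : ∫ t in Ioi (0:ℝ), g t ≤ 2 * ∫ s in Ioi (0:ℝ), gfun 0 c z d s := by
    rw [← integral_const_mul]
    refine setIntegral_mono_on hgint (I3.const_mul 2) measurableSet_Ioi ?_
    intro t ht
    simp only [gfun, hg, pow_zero, one_mul]
    have : (0:ℝ) ≤ Real.exp (-(1/2) * (z + d * t) ^ 2) := Real.exp_nonneg _
    nlinarith [le_of_lt (mem_Ioi.1 ht)]
  calc ∫ s in Ioi (0:ℝ), gfun n c z d s ≤ K * ∫ s in Ioi (0:ℝ), gfun 0 c z (d/2) s := step1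
    _ = K * (2 * ∫ t in Ioi (0:ℝ), g t) := by rw [step2]
    _ ≤ K * (2 * (2 * ∫ s in Ioi (0:ℝ), gfun 0 c z d s)) := by
        have := step3
        nlinarith [hK0, step3]
    _ = (4 * n.factorial * Real.exp (8/3)) * ∫ s in Ioi (0:ℝ), gfun 0 c z d s := by
        rw [hK]; ring


theorem stmt7 (m : ℕ) :
    ∃ C > 0, ∀ lam ∈ Set.Ioo (0:ℝ) 1, ∀ b p : ℝ, |p| ≤ b → b ≤ lam⁻¹ →
      (∫ p' in {q : ℝ | b ≤ |q|}, (|p'| - b) ^ m * Jker lam p p') ≤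
        C * ∫ p' in {q : ℝ | b ≤ |q|}, Jker lam p p' := by
  refine ⟨4 * m.factorial * Real.exp (8/3), by positivity, ?_⟩
  intro lam hlam b p hpb _hblam
  obtain ⟨hl0, hl1⟩ := hlam
  obtain ⟨hp1, hp2⟩ := abs_le.1 hpb
  have hb0 : 0 ≤ b := (abs_nonneg p).trans hpb
  set C : ℝ := 4 * m.factorial * Real.exp (8/3) with hC
  set d : ℝ := (1+lam)/2 with hd
  set Kl : ℝ := (1+lam)/64 with hKl
  set zp : ℝ := (1+lam)/2*b - (1-lam)/2*p with hzp
  set zm : ℝ := (1+lam)/2*b + (1-lam)/2*p with hzm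
  have hd2 : (1:ℝ)/2 ≤ d := by rw [hd]; linarith
  have hzp0 : 0 ≤ zp := by rw [hzp]; nlinarith
  have hzm0 : 0 ≤ zm := by rw [hzm]; nlinarith
  have hcp : 0 ≤ b - p := by linarith
  have hcm : 0 ≤ b + p := by linarith
  have hKl0 : 0 ≤ Kl := by rw [hKl]; linarith
  set fm : ℝ → ℝ := fun p' => (|p'| - b) ^ m * Jker lam p p' with hfm
  set f0 : ℝ → ℝ := fun p' => Jker lam p p' with hf0
  have hS : {q : ℝ | b ≤ |q|} = Iic (-b) ∪ Ici b := by
    ext q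
    simp only [mem_setOf_eq, mem_union, mem_Iic, mem_Ici, le_abs, le_neg]
    tauto
  have hdisj : AEDisjoint volume (Iic (-b)) (Ici b) := by
    show volume (Iic (-b) ∩ Ici b) = 0
    rw [Set.Iic_inter_Ici, Real.volume_Icc]
    exact ENNReal.ofReal_eq_zero.2 (by linarith)
  -- EqOn identities
  have Emp : EqOn (fun s => fm (s + b)) (fun s => Kl * gfun m (b - p) zp d s) (Ioi 0) := by
    intro s hs
    have hs0 : (0:ℝ) < s := hs
    show (|s + b| - b) ^ m * Jker lam p (s + b) = Kl * gfun m (b - p) zp d s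
    simp only [Jker, gfun, hKl, hzp, hd]
    rw [abs_of_nonneg (by linarith : (0:ℝ) ≤ s + b),
      abs_of_nonneg (by linarith : (0:ℝ) ≤ s + b - p),
      show (-(1/2) * ((1 - lam)/2 * p - (1 + lam)/2 * (s + b))^2 : ℝ)
        = -(1/2) * (((1+lam)/2*b - (1-lam)/2*p) + (1+lam)/2 * s)^2 from by ring]
    ring
  have E0p : EqOn (fun s => f0 (s + b)) (fun s => Kl * gfun 0 (b - p) zp d s) (Ioi 0) := by
    intro s hs
    have hs0 : (0:ℝ) < s := hs
    show Jker lam p (s + b) = Kl * gfun 0 (b - p) zp d s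
    simp only [Jker, gfun, hKl, hzp, hd]
    rw [abs_of_nonneg (by linarith : (0:ℝ) ≤ s + b - p),
      show (-(1/2) * ((1 - lam)/2 * p - (1 + lam)/2 * (s + b))^2 : ℝ)
        = -(1/2) * (((1+lam)/2*b - (1-lam)/2*p) + (1+lam)/2 * s)^2 from by ring]
    ring
  have Emm : EqOn (fun s => fm (-(s + b))) (fun s => Kl * gfun m (b + p) zm d s) (Ioi 0) := by
    intro s hs
    have hs0 : (0:ℝ) < s := hs
    show (|-(s + b)| - b) ^ m * Jker lam p (-(s + b)) = Kl * gfun m (b + p) zm d s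
    simp only [Jker, gfun, hKl, hzm, hd]
    rw [abs_neg, abs_of_nonneg (by linarith : (0:ℝ) ≤ s + b),
      show (-(s + b) - p : ℝ) = -(s + b + p) from by ring, abs_neg,
      abs_of_nonneg (by linarith : (0:ℝ) ≤ s + b + p),
      show (-(1/2) * ((1 - lam)/2 * p - (1 + lam)/2 * (-(s + b)))^2 : ℝ)
        = -(1/2) * (((1+lam)/2*b + (1-lam)/2*p) + (1+lam)/2 * s)^2 from by ring]
    ring
  have E0m : EqOn (fun s => f0 (-(s + b))) (fun s => Kl * gfun 0 (b + p) zm d s) (Ioi 0) := by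
    intro s hs
    have hs0 : (0:ℝ) < s := hs
    show Jker lam p (-(s + b)) = Kl * gfun 0 (b + p) zm d s
    simp only [Jker, gfun, hKl, hzm, hd]
    rw [show (-(s + b) - p : ℝ) = -(s + b + p) from by ring, abs_neg,
      abs_of_nonneg (by linarith : (0:ℝ) ≤ s + b + p),
      show (-(1/2) * ((1 - lam)/2 * p - (1 + lam)/2 * (-(s + b)))^2 : ℝ)
        = -(1/2) * (((1+lam)/2*b + (1-lam)/2*p) + (1+lam)/2 * s)^2 from by ring]
    ring
  have hd4 : (1:ℝ)/4 ≤ d := by linarith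
  -- integrability
  have Imp : IntegrableOn fm (Ici b) :=
    integrableOn_Ici_shift (IntegrableOn.congr_fun ((gfun_integrableOn m hcp hzp0 hd4).const_mul Kl)
      Emp.symm measurableSet_Ioi)
  have I0p : IntegrableOn f0 (Ici b) :=
    integrableOn_Ici_shift (IntegrableOn.congr_fun ((gfun_integrableOn 0 hcp hzp0 hd4).const_mul Kl)
      E0p.symm measurableSet_Ioi)
  have Imm : IntegrableOn fm (Iic (-b)) :=
    integrableOn_Iic_reflect (IntegrableOn.congr_fun ((gfun_integrableOn m hcm hzm0 hd4).const_mul Kl)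
      Emm.symm measurableSet_Ioi)
  have I0m : IntegrableOn f0 (Iic (-b)) :=
    integrableOn_Iic_reflect (IntegrableOn.congr_fun ((gfun_integrableOn 0 hcm hzm0 hd4).const_mul Kl)
      E0m.symm measurableSet_Ioi)
  -- integral values
  have VMp : ∫ x in Ici b, fm x = Kl * ∫ s in Ioi (0:ℝ), gfun m (b - p) zp d s :=
    (setIntegral_Ici_shift fm b).trans
      ((setIntegral_congr_fun measurableSet_Ioi Emp).trans (integral_const_mul _ _))
  have V0p : ∫ x in Ici b, f0 x = Kl * ∫ s in Ioi (0:ℝ), gfun 0 (b - p) zp d s :=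
    (setIntegral_Ici_shift f0 b).trans
      ((setIntegral_congr_fun measurableSet_Ioi E0p).trans (integral_const_mul _ _))
  have VMm : ∫ x in Iic (-b), fm x = Kl * ∫ s in Ioi (0:ℝ), gfun m (b + p) zm d s :=
    (setIntegral_Iic_reflect fm b).trans
      ((setIntegral_congr_fun measurableSet_Ioi Emm).trans (integral_const_mul _ _))
  have V0m : ∫ x in Iic (-b), f0 x = Kl * ∫ s in Ioi (0:ℝ), gfun 0 (b + p) zm d s :=
    (setIntegral_Iic_reflect f0 b).trans
      ((setIntegral_congr_fun measurableSet_Ioi E0m).trans (integral_const_mul _ _))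
  have lemAp := lemA m hcp hzp0 hd2
  have lemAm := lemA m hcm hzm0 hd2
  calc ∫ p' in {q : ℝ | b ≤ |q|}, fm p'
      = (∫ x in Iic (-b), fm x) + ∫ x in Ici b, fm x := by
        rw [hS]; exact integral_union_ae hdisj measurableSet_Ici.nullMeasurableSet Imm Imp
    _ = Kl * (∫ s in Ioi (0:ℝ), gfun m (b + p) zm d s)
        + Kl * (∫ s in Ioi (0:ℝ), gfun m (b - p) zp d s) := by rw [VMm, VMp]
    _ ≤ Kl * (C * ∫ s in Ioi (0:ℝ), gfun 0 (b + p) zm d s)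
        + Kl * (C * ∫ s in Ioi (0:ℝ), gfun 0 (b - p) zp d s) :=
        add_le_add (mul_le_mul_of_nonneg_left lemAm hKl0)
          (mul_le_mul_of_nonneg_left lemAp hKl0)
    _ = C * ((Kl * ∫ s in Ioi (0:ℝ), gfun 0 (b + p) zm d s)
        + Kl * ∫ s in Ioi (0:ℝ), gfun 0 (b - p) zp d s) := by ring
    _ = C * ∫ p' in {q : ℝ | b ≤ |q|}, f0 p' := by
        rw [hS, integral_union_ae hdisj measurableSet_Ici.nullMeasurableSet I0m I0p, V0m, V0p]
end

section
/- There exists a constant C > 0 such that for all λ ∈ (0,1) and all (x,p) ∈ [0,1) × ℝ, |p| + 𝒜_λ⁻(x,p) ≤ C·(1 + |p| + λ²·p²). -/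
open MeasureTheory Real

lemma sqrt_aux (c d s : ℝ) (hc : 0 ≤ c) (hd : 0 ≤ d) (hs : 0 ≤ s) :
    Real.sqrt ((c + d)^2 + s) ≤ Real.sqrt (c^2 + s) + d := by
  have h1 : c ≤ Real.sqrt (c^2 + s) := by
    have h := Real.sqrt_le_sqrt (show c^2 ≤ c^2 + s by linarith)
    rwa [Real.sqrt_sq hc] at h
  have h2 : (0:ℝ) ≤ Real.sqrt (c^2+s) := Real.sqrt_nonneg _
  have h3 : (Real.sqrt (c^2+s))^2 = c^2 + s := Real.sq_sqrt (by positivity)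
  rw [show Real.sqrt (c^2+s) + d = Real.sqrt ((Real.sqrt (c^2+s)+d)^2) from
    (Real.sqrt_sq (by positivity)).symm]
  apply Real.sqrt_le_sqrt
  nlinarith

lemma sqrt_one_side (s q q' : ℝ) (hs : 0 ≤ s) :
    Real.sqrt (q'^2 + s) ≤ Real.sqrt (q^2 + s) + |q' - q| := by
  have h0 : |q'| ≤ |q| + |q' - q| := by
    calc |q'| = |q + (q' - q)| := by ring_nf
    _ ≤ |q| + |q' - q| := abs_add_le _ _
  have h1 : q'^2 ≤ (|q| + |q'-q|)^2 := by
    have := abs_nonneg q'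
    nlinarith [sq_abs q']
  calc Real.sqrt (q'^2 + s) ≤ Real.sqrt ((|q| + |q'-q|)^2 + s) :=
        Real.sqrt_le_sqrt (by linarith)
    _ ≤ Real.sqrt (|q|^2 + s) + |q'-q| :=
        sqrt_aux _ _ _ (abs_nonneg q) (abs_nonneg _) hs
    _ = Real.sqrt (q^2 + s) + |q'-q| := by rw [sq_abs]

lemma sqrt_lip_s11 (s p p' : ℝ) (hs : 0 ≤ s) :
    |Real.sqrt (p'^2 + s) - Real.sqrt (p^2 + s)| ≤ |p' - p| := by
  rw [abs_sub_le_iff]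
  constructor
  · linarith [sqrt_one_side s p p' hs]
  · have h := sqrt_one_side s p' p hs
    have h2 : |p - p'| = |p' - p| := abs_sub_comm _ _
    linarith [h2 ▸ h]

lemma exp_key (t : ℝ) : t^2 * Real.exp (-(1/2) * t^2) ≤ 2 * Real.exp (-(t^2/4)) := by
  have h1 : Real.exp (-(1/2) * t^2) = Real.exp (-(t^2/4)) * Real.exp (-(t^2/4)) := by
    rw [← Real.exp_add]; ring_nf
  rw [h1]
  have h2 : t^2 * Real.exp (-(t^2/4)) ≤ 2 := by
    rw [Real.exp_neg, mul_inv_le_iff₀' (Real.exp_pos _)]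
    have h3 := Real.add_one_le_exp (t^2/8)
    have h4 : Real.exp (t^2/4) = Real.exp (t^2/8) * Real.exp (t^2/8) := by
      rw [← Real.exp_add]; ring_nf
    nlinarith [sq_nonneg (t^2 - 8), Real.exp_pos (t^2/8)]
  have h5 : (0:ℝ) < Real.exp (-(t^2/4)) := Real.exp_pos _
  nlinarith

lemma gauss_int (b d : ℝ) (hb : 0 < b) :
    Integrable (fun y : ℝ => Real.exp (-((b*y - d)^2/4))) ∧
    ∫ y : ℝ, Real.exp (-((b*y - d)^2/4)) = Real.sqrt (π / (b^2/4)) := by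
  have hb4 : 0 < b^2/4 := by positivity
  have hfun : (fun y : ℝ => Real.exp (-((b*y - d)^2/4))) =
      fun y => (fun z => Real.exp (-(b^2/4) * z^2)) (y - d/b) := by
    funext y; simp only; congr 1; field_simp
  constructor
  · rw [hfun]; exact (integrable_exp_neg_mul_sq hb4).comp_sub_right (d/b)
  · rw [hfun, integral_sub_right_eq_self (fun z => Real.exp (-(b^2/4) * z^2)) (d/b),
      integral_gaussian]

theorem stmt11 (V : ℝ → ℝ) (hV : ContDiff ℝ 1 V) (hper : ∀ x, V (x + 1) = V x)
    (hVnn : ∀ x, 0 ≤ V x) :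
    ∃ C > 0, ∀ lam ∈ Set.Ioo (0:ℝ) 1, ∀ x ∈ Set.Ico (0:ℝ) 1, ∀ p : ℝ,
      |p| + Aminus V lam x p ≤ C * (1 + |p| + lam^2 * p^2) := by
  refine ⟨2, by norm_num, ?_⟩
  rintro lam ⟨hl0, hl1⟩ x _ p
  set b := (1 + lam)/2 with hbdef
  have hb : 0 < b := by rw [hbdef]; linarith
  have hbhalf : 1/2 ≤ b := by rw [hbdef]; linarith
  have hb1 : b ≤ 1 := by rw [hbdef]; linarith
  set a := (1 - lam)/2 with hadef
  set c := (2 + lam^2 * p^2)/8 with hcdef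
  clear_value b a c
  have hnn : (0:ℝ) ≤ lam^2 * p^2 := by positivity
  have hc0 : 0 ≤ c := by rw [hcdef]; linarith
  have hgauss := gauss_int b (a*p) hb
  have hEint : Integrable (fun y : ℝ => Real.exp (-((b*y - a*p)^2/4))) := hgauss.1
  -- pointwise bound on the integrand
  have hpt : ∀ p' : ℝ, ‖(Real.sqrt (2 * Ham V x p') - Real.sqrt (2 * Ham V x p)) *
      Jker lam p p'‖ ≤ c * Real.exp (-((b*p' - a*p)^2/4)) := by
    intro p'
    set w := b*p' - a*p with hw
    have hs : (0:ℝ) ≤ 2 * V x := by linarith [hVnn x]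
    have h2H : ∀ q : ℝ, 2 * Ham V x q = q^2 + 2 * V x := by intro q; unfold Ham; ring
    have hsq : |Real.sqrt (2 * Ham V x p') - Real.sqrt (2 * Ham V x p)| ≤ |p' - p| := by
      rw [h2H, h2H]; exact sqrt_lip_s11 (2*V x) p p' hs
    have hJnn : 0 ≤ Jker lam p p' := by
      unfold Jker; positivity
    rw [norm_mul, Real.norm_eq_abs, Real.norm_eq_abs, abs_of_nonneg hJnn]
    have hJ : |p' - p| * Jker lam p p' =
        (b/32) * (p'-p)^2 * Real.exp (-(1/2) * w^2) := by
      unfold Jker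
      rw [show ((1-lam)/2 * p - (1+lam)/2 * p')^2 = w^2 by rw [hw, hbdef, hadef]; ring,
        ← sq_abs (p' - p)]
      rw [hbdef]; ring
    have hbp : b * (p' - p) = w - lam * p := by rw [hw, hbdef, hadef]; ring
    clear_value w
    have hsq2 : b^2 * (p'-p)^2 = (w - lam*p)^2 := by
      rw [show b^2*(p'-p)^2 = (b*(p'-p))^2 by ring, hbp]
    have h2 : b^2 * (p'-p)^2 ≤ 2*w^2 + 2*lam^2*p^2 := by
      nlinarith [sq_nonneg (w + lam*p)]
    have hint : (0:ℝ) ≤ (2*b-1) * (b * (p'-p)^2) :=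
      mul_nonneg (by linarith) (mul_nonneg hb.le (sq_nonneg _))
    have h1 : (b/32) * (p'-p)^2 ≤ (w^2 + lam^2*p^2)/8 := by nlinarith [h2, hint]
    have h4 : Real.exp (-(1/2)*w^2) ≤ Real.exp (-(w^2/4)) := by
      apply Real.exp_le_exp.mpr; nlinarith [sq_nonneg w]
    have hk := exp_key w
    have h5' : lam^2*p^2 * Real.exp (-(1/2)*w^2) ≤ lam^2*p^2 * Real.exp (-(w^2/4)) :=
      mul_le_mul_of_nonneg_left h4 hnn
    calc |Real.sqrt (2 * Ham V x p') - Real.sqrt (2 * Ham V x p)| * Jker lam p p'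
        ≤ |p' - p| * Jker lam p p' := mul_le_mul_of_nonneg_right hsq hJnn
      _ = (b/32) * (p'-p)^2 * Real.exp (-(1/2) * w^2) := hJ
      _ ≤ (w^2 + lam^2*p^2)/8 * Real.exp (-(1/2) * w^2) :=
          mul_le_mul_of_nonneg_right h1 (Real.exp_pos _).le
      _ ≤ c * Real.exp (-(w^2/4)) := by rw [hcdef]; linarith
  have hAbound : |Acal V lam x p| ≤ c * Real.sqrt (π/(b^2/4)) := by
    have h := norm_integral_le_of_norm_le (hEint.const_mul c)
      (Filter.Eventually.of_forall hpt)
    rw [integral_const_mul, hgauss.2] at h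
    unfold Acal
    rw [← Real.norm_eq_abs]
    exact h
  have hsqrt : Real.sqrt (π/(b^2/4)) ≤ 8 := by
    have h64 : Real.sqrt 64 = 8 := by
      rw [show (64:ℝ) = 8^2 by norm_num, Real.sqrt_sq (by norm_num)]
    rw [← h64]
    apply Real.sqrt_le_sqrt
    rw [div_le_iff₀ (by positivity)]
    nlinarith [Real.pi_le_four, mul_le_mul_of_nonneg_left hbhalf hb.le]
  have hAm : Aminus V lam x p ≤ 2 + lam^2 * p^2 := by
    have h6 : |Acal V lam x p| ≤ 2 + lam^2*p^2 := by
      calc |Acal V lam x p| ≤ c * Real.sqrt (π/(b^2/4)) := hAbound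
        _ ≤ c * 8 := mul_le_mul_of_nonneg_left hsqrt hc0
        _ = 2 + lam^2*p^2 := by rw [hcdef]; ring
    unfold Aminus
    exact le_trans (max_le (neg_le_abs _) (abs_nonneg _)) h6
  linarith [abs_nonneg p]
end

section
/- There exists a constant C > 0 such that for all λ ∈ (0,1) and all (x,p) ∈ [0,1) × ℝ with |p| ≤ λ^{-1}, 𝒜_λ⁻(x,p) ≤ C·λ·√(H(x,p)). -/
open MeasureTheory Real

lemma expDiff (A B : ℝ) (hA : 0 ≤ A) (hB : 0 ≤ B) :
    |Real.exp (-A) - Real.exp (-B)| ≤ |A - B| * (Real.exp (-A) + Real.exp (-B)) := by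
  have key : ∀ X Y : ℝ, X ≤ Y → Real.exp (-X) - Real.exp (-Y) ≤ (Y - X) * Real.exp (-X) := by
    intro X Y h
    have h1 : Real.exp (-Y) = Real.exp (-X) * Real.exp (X - Y) := by
      rw [← Real.exp_add]; ring_nf
    have h2 : 1 - (Y - X) ≤ Real.exp (X - Y) := by
      have := Real.add_one_le_exp (X - Y); linarith
    have h3 : Real.exp (-X) * (1 - (Y - X)) ≤ Real.exp (-Y) := by
      rw [h1]; exact mul_le_mul_of_nonneg_left h2 (Real.exp_pos _).le
    nlinarith [Real.exp_pos (-X)]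
  rcases le_total A B with h | h
  · have h0 : Real.exp (-B) ≤ Real.exp (-A) := Real.exp_le_exp.mpr (by linarith)
    rw [abs_of_nonneg (by linarith), abs_of_nonpos (by linarith)]
    have := key A B h
    nlinarith [Real.exp_pos (-B)]
  · have h0 : Real.exp (-A) ≤ Real.exp (-B) := Real.exp_le_exp.mpr (by linarith)
    rw [abs_of_nonpos (by linarith), abs_of_nonneg (by linarith)]
    have := key B A h
    nlinarith [Real.exp_pos (-A)]

lemma sqrtLip (c : ℝ) (hc : 0 ≤ c) (x y : ℝ) :
    |Real.sqrt (x^2 + c) - Real.sqrt (y^2 + c)| ≤ |x - y| := by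
  have key : ∀ a b : ℝ, Real.sqrt (a^2+c) - Real.sqrt (b^2+c) ≤ |a - b| := by
    intro a b
    have hb : |b| ≤ Real.sqrt (b^2+c) := by
      rw [← Real.sqrt_sq_eq_abs]; exact Real.sqrt_le_sqrt (by linarith)
    have hbnn := Real.sqrt_nonneg (b^2+c)
    have hbsq : (Real.sqrt (b^2+c))^2 = b^2 + c := Real.sq_sqrt (by positivity)
    have h3 : Real.sqrt (a^2+c) ≤ Real.sqrt (b^2+c) + |a-b| := by
      have h2 : a^2 + c ≤ (Real.sqrt (b^2+c) + |a-b|)^2 := by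
        have hab : |a| ≤ |b| + |a-b| := by
          calc |a| = |b + (a-b)| := by ring_nf
          _ ≤ |b| + |a-b| := abs_add_le _ _
        nlinarith [abs_nonneg (a-b), abs_nonneg b, abs_nonneg a, sq_abs a, sq_abs b,
          mul_le_mul_of_nonneg_right hb (abs_nonneg (a-b))]
      calc Real.sqrt (a^2+c) ≤ Real.sqrt ((Real.sqrt (b^2+c) + |a-b|)^2) :=
            Real.sqrt_le_sqrt h2
      _ = Real.sqrt (b^2+c) + |a-b| := Real.sqrt_sq (by positivity)
    linarith
  rw [abs_sub_le_iff]
  exact ⟨key x y, by rw [abs_sub_comm]; exact key y x⟩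

lemma gaussDom {b m : ℝ} (hb1 : 1/2 ≤ b) (hb2 : b ≤ 1) (hm : |m| ≤ 1) (u : ℝ) :
    Real.exp (-((1/2) * (b*u+m)^2)) ≤ Real.exp (9/2) * Real.exp (-(u^2/16)) := by
  rw [← Real.exp_add]
  apply Real.exp_le_exp.mpr
  have hm2 : m^2 ≤ 1 := by nlinarith [sq_abs m, abs_nonneg m]
  have h4b : u^2 ≤ 4*(b*u)^2 := by
    nlinarith [mul_nonneg (mul_nonneg (by linarith : (0:ℝ) ≤ 2*b-1)
      (by linarith : (0:ℝ) ≤ 2*b+1)) (sq_nonneg u)]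
  nlinarith [sq_nonneg (b*u + 2*m)]

lemma psiInt : Integrable (fun u : ℝ => (u^2 + |u|^3) * Real.exp (-(u^2/16))) := by
  apply Integrable.mono' ((integrable_exp_neg_mul_sq (by norm_num : (0:ℝ) < 1/32)).const_mul 4160)
  · apply Continuous.aestronglyMeasurable; fun_prop
  · filter_upwards with u
    rw [Real.norm_eq_abs, abs_of_nonneg (by positivity)]
    have hE1 : (1:ℝ) ≤ Real.exp (u^2/32) := Real.one_le_exp (by positivity)
    have hu2 : u^2 ≤ 32 * Real.exp (u^2/32) := by
      have := Real.add_one_le_exp (u^2/32); nlinarith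
    have hu4 : u^4 ≤ 4096 * Real.exp (u^2/32) := by
      have hhalf := Real.add_one_le_exp (u^2/64)
      have hsq : Real.exp (u^2/32) = Real.exp (u^2/64) * Real.exp (u^2/64) := by
        rw [← Real.exp_add]; ring_nf
      nlinarith [sq_nonneg u, Real.exp_pos (u^2/64), sq_nonneg (u^2/64)]
    have hu3 : |u|^3 ≤ u^4 + 1 := by
      nlinarith [sq_nonneg (u^2 - |u|), sq_nonneg (u^2 - 1/2), sq_abs u, abs_nonneg u]
    have key : u^2 + |u|^3 ≤ 4160 * Real.exp (u^2/32) := by nlinarith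
    calc (u^2 + |u|^3) * Real.exp (-(u^2/16))
        ≤ (4160 * Real.exp (u^2/32)) * Real.exp (-(u^2/16)) := by
          apply mul_le_mul_of_nonneg_right key (Real.exp_pos _).le
    _ = 4160 * Real.exp (-(1/32) * u^2) := by
          rw [mul_assoc, ← Real.exp_add]; congr 1; ring

set_option maxHeartbeats 1000000 in
theorem stmt12 (V : ℝ → ℝ) (hV : ContDiff ℝ 1 V) (hper : ∀ x, V (x + 1) = V x)
    (hVnn : ∀ x, 0 ≤ V x) :
    ∃ C > 0, ∀ lam ∈ Set.Ioo (0:ℝ) 1, ∀ x ∈ Set.Ico (0:ℝ) 1, ∀ p : ℝ,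
      |p| ≤ lam⁻¹ → Aminus V lam x p ≤ C * lam * Real.sqrt (Ham V x p) := by
  classical
  set ψ : ℝ → ℝ := fun u => (u^2 + |u|^3) * Real.exp (-(u^2/16)) with hψdef
  have hψ_int : Integrable ψ := psiInt
  have hψ_nn : ∀ u, 0 ≤ ψ u := fun u => by rw [hψdef]; positivity
  set C0 : ℝ := ∫ u, ψ u with hC0def
  have hC0 : 0 ≤ C0 := integral_nonneg hψ_nn
  set K : ℝ := Real.exp (9/2)/16 * C0 with hKdef
  have hK : 0 ≤ K := mul_nonneg (by positivity) hC0
  clear_value ψ C0 K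
  refine ⟨Real.sqrt 2 * K + 1, by nlinarith [mul_nonneg (Real.sqrt_nonneg 2) hK], ?_⟩
  rintro lam ⟨hl0, hl1⟩ x _ p hp
  have hc : 0 ≤ V x := hVnn x
  have hb1 : 1/2 ≤ (1+lam)/2 := by linarith
  have hb2 : (1+lam)/2 ≤ 1 := by linarith
  have hm1 : |lam * p| ≤ 1 := by
    rw [abs_mul, abs_of_pos hl0]
    calc lam * |p| ≤ lam * lam⁻¹ := mul_le_mul_of_nonneg_left hp hl0.le
    _ = 1 := mul_inv_cancel₀ (ne_of_gt hl0)
  have hHam2 : ∀ q : ℝ, 2 * Ham V x q = q^2 + 2 * V x := by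
    intro q; unfold Ham; ring
  set S : ℝ := Real.sqrt (p^2 + 2 * V x) with hSdef
  have hS0 : 0 ≤ S := Real.sqrt_nonneg _
  have hSsq : S^2 = p^2 + 2*V x := Real.sq_sqrt (by positivity)
  clear_value S
  -- kernel rewrite
  have hJ : ∀ p' : ℝ, Jker lam p p' =
      ((1+lam)/64) * |p'-p| * Real.exp (-((1/2) * ((1+lam)/2*(p'-p) + lam*p)^2)) := by
    intro p'
    unfold Jker
    rw [show (-(1/2) * ((1 - lam)/2 * p - (1 + lam)/2 * p')^2 : ℝ)
        = -((1/2) * ((1+lam)/2*(p'-p) + lam*p)^2) from by ring]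
  have hJnn : ∀ p', 0 ≤ Jker lam p p' := by
    intro p'; rw [hJ p']; positivity
  -- dominating function
  set G : ℝ → ℝ := fun p' => (Real.exp (9/2)/16) * ψ (p' - p) with hGdef
  have hG_int : Integrable G := (hψ_int.comp_sub_right p).const_mul _
  have hG_val : ∫ p', G p' = K := by
    rw [hGdef, hKdef]
    rw [MeasureTheory.integral_const_mul]
    rw [integral_sub_right_eq_self ψ p, ← hC0def]
  clear_value G
  -- bound: |p'-p| * Jker ≤ G
  have hkey1 : ∀ p', |p'-p| * Jker lam p p' ≤ G p' := by
    intro p'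
    rw [hJ p']; simp only [hGdef, hψdef]
    set u := p' - p with hu
    clear_value u
    have he := gaussDom hb1 hb2 hm1 u
    have habs : |u| * |u| = u^2 := by rw [← sq_abs, sq]
    have h1 : |u| * ((1+lam)/64 * |u| *
        Real.exp (-((1/2) * ((1+lam)/2*u + lam*p)^2)))
        ≤ |u| * ((1+lam)/64 * |u| * (Real.exp (9/2) * Real.exp (-(u^2/16)))) := by
      apply mul_le_mul_of_nonneg_left _ (abs_nonneg u)
      apply mul_le_mul_of_nonneg_left he (by positivity)
    refine h1.trans ?_
    have h2 : |u| * ((1+lam)/64 * |u| * (Real.exp (9/2) * Real.exp (-(u^2/16))))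
        = ((1+lam)/64) * (Real.exp (9/2) * (u^2 * Real.exp (-(u^2/16)))) := by
      rw [← habs]; ring
    rw [h2]
    have h3 : (1+lam)/64 ≤ 1/32 := by linarith
    have hpos : 0 ≤ Real.exp (9/2) * (u^2 * Real.exp (-(u^2/16))) := by positivity
    calc ((1+lam)/64) * (Real.exp (9/2) * (u^2 * Real.exp (-(u^2/16))))
        ≤ (1/32) * (Real.exp (9/2) * (u^2 * Real.exp (-(u^2/16)))) :=
          mul_le_mul_of_nonneg_right h3 hpos
    _ ≤ Real.exp (9/2)/16 * ((u^2 + |u|^3) * Real.exp (-(u^2/16))) := by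
          nlinarith [Real.exp_pos (9/2), Real.exp_pos (-(u^2/16)),
            mul_nonneg (mul_nonneg (Real.exp_pos (9/2)).le (Real.exp_pos (-(u^2/16))).le)
              (pow_nonneg (abs_nonneg u) 3),
            mul_nonneg (mul_nonneg (Real.exp_pos (9/2)).le (Real.exp_pos (-(u^2/16))).le)
              (sq_nonneg u)]
  -- the functions
  have hf1b : ∀ p', |(Real.sqrt (2 * Ham V x p') - Real.sqrt (2 * Ham V x p)) * Jker lam p p'|
      ≤ G p' := by
    intro p'
    have hlip : |Real.sqrt (2*Ham V x p') - Real.sqrt (2*Ham V x p)| ≤ |p' - p| := by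
      rw [hHam2 p', hHam2 p]; exact sqrtLip (2*V x) (by linarith) p' p
    rw [abs_mul, abs_of_nonneg (hJnn p')]
    exact (mul_le_mul_of_nonneg_right hlip (hJnn p')).trans (hkey1 p')
  have hf2b : ∀ p', |(p' - p) * Jker lam p p'| ≤ G p' := by
    intro p'
    rw [abs_mul, abs_of_nonneg (hJnn p')]
    exact hkey1 p'
  have hf1cont : Continuous fun p' => (Real.sqrt (2 * Ham V x p') - Real.sqrt (2 * Ham V x p)) * Jker lam p p' := by
    unfold Ham Jker; fun_prop
  have hf2cont : Continuous fun p' => (p' - p) * Jker lam p p' := by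
    unfold Jker; fun_prop
  have hf1int : Integrable fun p' => (Real.sqrt (2 * Ham V x p') - Real.sqrt (2 * Ham V x p)) * Jker lam p p' :=
    hG_int.mono' hf1cont.aestronglyMeasurable
      (Filter.Eventually.of_forall fun p' => by rw [Real.norm_eq_abs]; exact hf1b p')
  have hf2int : Integrable fun p' => (p' - p) * Jker lam p p' :=
    hG_int.mono' hf2cont.aestronglyMeasurable
      (Filter.Eventually.of_forall fun p' => by rw [Real.norm_eq_abs]; exact hf2b p')
  -- odd comparison kernel
  set g0 : ℝ → ℝ := fun u => ((1+lam)/64) * (u * |u|) *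
      Real.exp (-((1/2) * ((1+lam)/2*u)^2)) with hg0def
  have hg0b : ∀ u : ℝ, |g0 u| ≤ (Real.exp (9/2)/16) * ψ u := by
    intro u
    simp only [hg0def, hψdef]
    have he : Real.exp (-((1/2) * ((1+lam)/2*u)^2)) ≤ Real.exp (9/2) * Real.exp (-(u^2/16)) := by
      have := gaussDom hb1 hb2 (by norm_num : |(0:ℝ)| ≤ 1) u
      simpa using this
    have habs : |u| * |u| = u^2 := by rw [← sq_abs, sq]
    have h1 : |((1+lam)/64) * (u * |u|) * Real.exp (-((1/2) * ((1+lam)/2*u)^2))|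
        = ((1+lam)/64) * u^2 * Real.exp (-((1/2) * ((1+lam)/2*u)^2)) := by
      rw [abs_mul, abs_mul, abs_of_nonneg (by positivity : (0:ℝ) ≤ (1+lam)/64),
        abs_of_nonneg (Real.exp_pos _).le, abs_mul, abs_abs, habs]
    rw [h1]
    have h2 : ((1+lam)/64) * u^2 * Real.exp (-((1/2) * ((1+lam)/2*u)^2))
        ≤ ((1+lam)/64) * u^2 * (Real.exp (9/2) * Real.exp (-(u^2/16))) :=
      mul_le_mul_of_nonneg_left he (by positivity)
    refine h2.trans ?_
    have h3 : (1+lam)/64 ≤ 1/32 := by linarith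
    nlinarith [Real.exp_pos (9/2), Real.exp_pos (-(u^2/16)),
      mul_nonneg (mul_nonneg (Real.exp_pos (9/2)).le (Real.exp_pos (-(u^2/16))).le)
        (pow_nonneg (abs_nonneg u) 3),
      mul_nonneg (mul_nonneg (Real.exp_pos (9/2)).le (Real.exp_pos (-(u^2/16))).le)
        (sq_nonneg u)]
  have hg0cont : Continuous g0 := by rw [hg0def]; fun_prop
  clear_value g0
  have hgint : Integrable fun p' => g0 (p' - p) :=
    hG_int.mono' (hg0cont.comp (continuous_id.sub continuous_const)).aestronglyMeasurable
      (Filter.Eventually.of_forall fun p' => by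
        rw [Real.norm_eq_abs]; simp only [hGdef]; exact hg0b (p' - p))
  have hg0odd : ∀ u : ℝ, g0 (-u) = - g0 u := by
    intro u
    rw [hg0def]
    dsimp only
    rw [abs_neg, show ((1+lam)/2*(-u))^2 = ((1+lam)/2*u)^2 from by ring]
    ring
  have hg0zero : ∫ u, g0 u = 0 := by
    have h1 : ∫ u : ℝ, g0 (-u) = ∫ u : ℝ, g0 u := integral_neg_eq_self g0 _
    have h2 : ∫ u : ℝ, g0 (-u) = - ∫ u : ℝ, g0 u := by
      simp_rw [hg0odd]; exact integral_neg g0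
    linarith
  have hgzero : ∫ p' : ℝ, g0 (p' - p) = 0 := by
    rw [integral_sub_right_eq_self g0 p]; exact hg0zero
  -- difference bound
  have hdiffb : ∀ p' : ℝ, |(p' - p) * Jker lam p p' - g0 (p' - p)| ≤ |lam*p| * G p' := by
    intro p'
    rw [hJ p']; simp only [hg0def, hGdef, hψdef]
    set u := p' - p with hu
    set A : ℝ := (1/2) * ((1+lam)/2*u + lam*p)^2 with hAdef
    set B : ℝ := (1/2) * ((1+lam)/2*u)^2 with hBdef
    have hA : 0 ≤ A := by rw [hAdef]; positivity
    have hB : 0 ≤ B := by rw [hBdef]; positivity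
    clear_value u A B
    have hed := expDiff A B hA hB
    have habd : |A - B| ≤ |lam*p| * (|u| + 1/2) := by
      have hAB : A - B = (lam*p) * ((1+lam)/2*u) + (lam*p)^2/2 := by
        rw [hAdef, hBdef]; ring
      rw [hAB]
      have e1 : |(lam*p) * ((1+lam)/2*u) + (lam*p)^2/2|
          ≤ |(lam*p) * ((1+lam)/2*u)| + |(lam*p)^2/2| := abs_add_le _ _
      have e2 : |(lam*p) * ((1+lam)/2*u)| = |lam*p| * ((1+lam)/2 * |u|) := by
        rw [abs_mul (lam*p) ((1+lam)/2*u), abs_mul ((1+lam)/2) u,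
          abs_of_nonneg (by positivity : (0:ℝ) ≤ (1+lam)/2)]
      have e3 : (1+lam)/2 * |u| ≤ |u| := by
        nlinarith [abs_nonneg u]
      have e4 : |(lam*p)^2/2| ≤ |lam*p| * (1/2) := by
        rw [abs_of_nonneg (by positivity)]
        nlinarith [sq_abs (lam*p), abs_nonneg (lam*p)]
      calc |(lam*p) * ((1+lam)/2*u) + (lam*p)^2/2|
          ≤ |lam*p| * ((1+lam)/2 * |u|) + |(lam*p)^2/2| := by rw [← e2]; exact e1
      _ ≤ |lam*p| * |u| + |lam*p| * (1/2) := by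
          have := mul_le_mul_of_nonneg_left e3 (abs_nonneg (lam*p))
          linarith [e4]
      _ = |lam*p| * (|u| + 1/2) := by ring
    have heA : Real.exp (-A) ≤ Real.exp (9/2) * Real.exp (-(u^2/16)) := by
      rw [hAdef]; exact gaussDom hb1 hb2 hm1 u
    have heB : Real.exp (-B) ≤ Real.exp (9/2) * Real.exp (-(u^2/16)) := by
      rw [hBdef]
      have := gaussDom hb1 hb2 (by norm_num : |(0:ℝ)| ≤ 1) u
      simpa using this
    have habs : |u| * |u| = u^2 := by rw [← sq_abs, sq]
    have hsplit : (1+lam)/64 * |u| * Real.exp (-A) * u - ((1+lam)/64) * (u * |u|) * Real.exp (-B)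
        = ((1+lam)/64) * (u * |u|) * (Real.exp (-A) - Real.exp (-B)) := by ring
    have h0 : |u * ((1+lam)/64 * |u| * Real.exp (-A)) - ((1+lam)/64) * (u * |u|) * Real.exp (-B)|
        = ((1+lam)/64) * u^2 * |Real.exp (-A) - Real.exp (-B)| := by
      rw [show u * ((1+lam)/64 * |u| * Real.exp (-A)) - ((1+lam)/64) * (u * |u|) * Real.exp (-B)
          = ((1+lam)/64) * (u * |u|) * (Real.exp (-A) - Real.exp (-B)) from by ring]
      rw [abs_mul, abs_mul, abs_of_nonneg (by positivity : (0:ℝ) ≤ (1+lam)/64),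
        abs_mul, abs_abs, habs]
    rw [h0]
    have step1 : ((1+lam)/64) * u^2 * |Real.exp (-A) - Real.exp (-B)|
        ≤ ((1+lam)/64) * u^2 * (|A - B| * (Real.exp (-A) + Real.exp (-B))) :=
      mul_le_mul_of_nonneg_left hed (by positivity)
    have step2 : |A - B| * (Real.exp (-A) + Real.exp (-B))
        ≤ (|lam*p| * (|u| + 1/2)) * (2 * (Real.exp (9/2) * Real.exp (-(u^2/16)))) := by
      apply mul_le_mul habd (by linarith) (by positivity)
      positivity
    have step3 : ((1+lam)/64) * u^2 * (|A - B| * (Real.exp (-A) + Real.exp (-B)))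
        ≤ ((1+lam)/64) * u^2 * ((|lam*p| * (|u| + 1/2)) * (2 * (Real.exp (9/2) * Real.exp (-(u^2/16))))) :=
      mul_le_mul_of_nonneg_left step2 (by positivity)
    refine step1.trans (step3.trans ?_)
    have h164 : (1+lam)/64 ≤ 1/32 := by linarith
    have hpoly : u^2 * (|u| + 1/2) ≤ u^2 + |u|^3 := by
      have h3 : |u|^3 = u^2 * |u| := by rw [pow_succ, sq_abs]
      have h4 : u^2 * (|u| + 1/2) = |u|^3 + u^2/2 := by rw [h3]; ring
      rw [h4]; linarith [sq_nonneg u]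
    -- final arithmetic
    have hEnn : (0:ℝ) ≤ Real.exp (9/2) * Real.exp (-(u^2/16)) := by positivity
    have hmnn : (0:ℝ) ≤ |lam*p| := abs_nonneg _
    calc ((1+lam)/64) * u^2 * ((|lam*p| * (|u| + 1/2)) * (2 * (Real.exp (9/2) * Real.exp (-(u^2/16)))))
        = |lam*p| * ((1+lam)/32 * ((u^2 * (|u| + 1/2)) * (Real.exp (9/2) * Real.exp (-(u^2/16))))) := by
          ring
    _ ≤ |lam*p| * (Real.exp (9/2)/16 * ((u^2 + |u|^3) * Real.exp (-(u^2/16)))) := by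
        apply mul_le_mul_of_nonneg_left _ hmnn
        have c1 : (1+lam)/32 * ((u^2 * (|u| + 1/2)) * (Real.exp (9/2) * Real.exp (-(u^2/16))))
            ≤ (1/16) * ((u^2 * (|u| + 1/2)) * (Real.exp (9/2) * Real.exp (-(u^2/16)))) := by
          apply mul_le_mul_of_nonneg_right (by linarith)
          positivity
        refine c1.trans ?_
        have c2 : (u^2 * (|u| + 1/2)) * (Real.exp (9/2) * Real.exp (-(u^2/16)))
            ≤ ((u^2 + |u|^3)) * (Real.exp (9/2) * Real.exp (-(u^2/16))) :=
          mul_le_mul_of_nonneg_right hpoly hEnn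
        calc (1/16) * ((u^2 * (|u| + 1/2)) * (Real.exp (9/2) * Real.exp (-(u^2/16))))
            ≤ (1/16) * (((u^2 + |u|^3)) * (Real.exp (9/2) * Real.exp (-(u^2/16)))) := by
              linarith
        _ = Real.exp (9/2)/16 * ((u^2 + |u|^3) * Real.exp (-(u^2/16))) := by ring
  -- M1 bound
  set M1 : ℝ := ∫ p' : ℝ, (p' - p) * Jker lam p p' with hM1def
  clear_value M1
  have hM1 : |M1| ≤ |lam*p| * K := by
    have hsub : M1 = ∫ p' : ℝ, ((p' - p) * Jker lam p p' - g0 (p' - p)) := by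
      rw [hM1def, integral_sub hf2int hgint, hgzero, sub_zero]
    rw [hsub]
    have hb := MeasureTheory.norm_integral_le_of_norm_le (μ := volume)
      (f := fun p' => (p' - p) * Jker lam p p' - g0 (p' - p))
      (g := fun p' => |lam*p| * G p')
      (hG_int.const_mul _)
      (Filter.Eventually.of_forall fun p' => by rw [Real.norm_eq_abs]; exact hdiffb p')
    rw [Real.norm_eq_abs] at hb
    refine hb.trans ?_
    rw [MeasureTheory.integral_const_mul, hG_val]
  -- convexity
  have hconv : ∀ p' : ℝ, (p / S) * (p' - p) ≤ Real.sqrt (p'^2 + 2*V x) - S := by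
    intro p'
    set T := Real.sqrt (p'^2 + 2*V x) with hT
    have hT0 : 0 ≤ T := Real.sqrt_nonneg _
    have hTsq : T^2 = p'^2 + 2*V x := Real.sq_sqrt (by positivity)
    rcases eq_or_lt_of_le hS0 with hS | hS
    · have hp0 : p = 0 := by
        have h00 : p^2 + 2*V x = 0 := by rw [← hSsq, ← hS]; norm_num
        nlinarith [sq_nonneg p]
      rw [← hS, hp0]
      simpa using hT0
    · have hkey : p * p' + 2*V x ≤ T * S := by
        have h1 : (p*p' + 2*V x)^2 ≤ (T*S)^2 := by
          have hTS : (T*S)^2 = (p'^2+2*V x)*(p^2+2*V x) := by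
            rw [mul_pow, hTsq, hSsq]
          rw [hTS]
          nlinarith [mul_nonneg hc (sq_nonneg (p - p'))]
        nlinarith [mul_nonneg hT0 hS.le]
      rw [div_mul_eq_mul_div, div_le_iff₀ hS]
      nlinarith [hkey, hSsq]
  -- lower bound for Acal
  have hAc : (p / S) * M1 ≤ Acal V lam x p := by
    have h0 : Acal V lam x p
        = ∫ p' : ℝ, (Real.sqrt (2 * Ham V x p') - Real.sqrt (2 * Ham V x p)) * Jker lam p p' := rfl
    rw [h0, hM1def, ← MeasureTheory.integral_const_mul]
    apply integral_mono (hf2int.const_mul _) hf1int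
    intro p'
    dsimp only
    have hrw : Real.sqrt (2*Ham V x p') = Real.sqrt (p'^2 + 2*V x) := by rw [hHam2]
    have hrwp : Real.sqrt (2*Ham V x p) = S := by rw [hHam2 p, hSdef]
    rw [hrw, hrwp]
    calc (p/S) * ((p'-p) * Jker lam p p') = ((p/S)*(p'-p)) * Jker lam p p' := by ring
    _ ≤ (Real.sqrt (p'^2+2*V x) - S) * Jker lam p p' :=
        mul_le_mul_of_nonneg_right (hconv p') (hJnn p')
  -- finish
  have hHamnn : 0 ≤ Ham V x p := by unfold Ham; nlinarith [sq_nonneg p]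
  have h6 : S = Real.sqrt 2 * Real.sqrt (Ham V x p) := by
    rw [hSdef, ← hHam2 p, Real.sqrt_mul (by norm_num : (0:ℝ) ≤ 2)]
  have h5 : p^2 / S ≤ S := by
    rcases eq_or_lt_of_le hS0 with h | h
    · rw [← h, div_zero]
    · rw [div_le_iff₀ h]; nlinarith [hSsq]
  have habsm : |lam * p| = lam * |p| := by rw [abs_mul, abs_of_pos hl0]
  have hneg : -(Acal V lam x p) ≤ Real.sqrt 2 * K * lam * Real.sqrt (Ham V x p) := by
    have h1 : -(Acal V lam x p) ≤ -((p/S) * M1) := neg_le_neg hAc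
    have h2 : -((p/S) * M1) ≤ |p/S| * |M1| := by
      calc -((p/S) * M1) ≤ |(p/S) * M1| := neg_le_abs _
      _ = |p/S| * |M1| := abs_mul _ _
    have h3 : |p/S| * |M1| ≤ (|p|/S) * (|lam*p| * K) := by
      rw [abs_div, abs_of_nonneg hS0]
      exact mul_le_mul_of_nonneg_left hM1 (by positivity)
    have h4 : (|p|/S) * (|lam*p| * K) = K * lam * (p^2/S) := by
      rw [habsm]
      rw [show |p| / S * (lam * |p| * K) = K * lam * (|p| * |p| / S) from by ring]
      rw [← sq_abs p, sq]
    have h7 : K * lam * (p^2/S) ≤ K * lam * S :=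
      mul_le_mul_of_nonneg_left h5 (mul_nonneg hK hl0.le)
    have h8 : K * lam * S = Real.sqrt 2 * K * lam * Real.sqrt (Ham V x p) := by
      rw [h6]; ring
    linarith
  unfold Aminus
  apply max_le
  · refine hneg.trans ?_
    have hpos : 0 ≤ lam * Real.sqrt (Ham V x p) :=
      mul_nonneg hl0.le (Real.sqrt_nonneg _)
    nlinarith [mul_nonneg (Real.sqrt_nonneg 2) hK]
  · have : 0 ≤ (Real.sqrt 2 * K + 1) * lam :=
      mul_nonneg (by nlinarith [mul_nonneg (Real.sqrt_nonneg 2) hK]) hl0.le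
    exact mul_nonneg this (Real.sqrt_nonneg _)
end
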